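/- arXiv:0708.0019 — 7 statements merged into one kernel-verified Lean document; each statement's English description precedes it below -/
import Mathlib

section
/- Let A be a well-ordered subset of the nonnegative real numbers which has an accumulation point in ℝ. For a positive integer m, let mA = {x_1 + x_2 + ⋯ + x_m : x_1, …, x_m ∈ A}. Then mA contains a well-ordered subset of ordinal type ω^m. -/
open Filter

/-- The ordinal type of a well-ordered subset of a linear order: the unique ordinal
order-isomorphic to it. -/
noncomputable def setOrdinalType {α : Type*} [LinearOrder α] (S : Set α) (h : S.IsWF) :
    Ordinal :=
  letI : WellFoundedLT S := ⟨h⟩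
  Ordinal.type ((· < ·) : S → S → Prop)

/-- Auxiliary recursive family of well-ordered types: `MyW m` is the `m`-fold
lexicographic product of `ℕ`, of order type `ω ^ m`. -/
def MyW : ℕ → Type := fun n => Nat.rec PUnit (fun _ X => ℕ ×ₗ X) n

instance MyW.instLinearOrder : ∀ m, LinearOrder (MyW m) := fun m =>
  Nat.rec (motive := fun k => LinearOrder (MyW k))
    (inferInstanceAs (LinearOrder PUnit))
    (fun k inst => letI : LinearOrder (MyW k) := inst
      inferInstanceAs (LinearOrder (ℕ ×ₗ MyW k))) m

instance : WellFoundedLT PUnit.{1} :=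
  ⟨⟨fun a => ⟨a, fun b h => absurd (Subsingleton.elim b a ▸ h) (lt_irrefl a)⟩⟩⟩

instance MyW.instWellFoundedLT : ∀ m, WellFoundedLT (MyW m) := fun m =>
  Nat.rec (motive := fun k => WellFoundedLT (MyW k))
    (inferInstanceAs (WellFoundedLT PUnit))
    (fun k inst => letI : WellFoundedLT (MyW k) := inst
      show WellFoundedLT (MyW (k+1)) from inferInstanceAs (WellFoundedLT (ℕ ×ₗ MyW k))) m

instance (priority := 5000) MyW.isWellOrder (m : ℕ) : IsWellOrder (MyW m) (· < ·) :=
  isWellOrder_lt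

/-- First (most significant) component of an element of `MyW (m+1)`. -/
def MyW.fst {m : ℕ} (w : MyW (m+1)) : ℕ := (ofLex (show ℕ ×ₗ MyW m from w)).1

/-- Second component of an element of `MyW (m+1)`. -/
def MyW.snd {m : ℕ} (w : MyW (m+1)) : MyW m := (ofLex (show ℕ ×ₗ MyW m from w)).2

/-- Pairing constructor for `MyW (m+1)`. -/
def MyW.mk {m : ℕ} (n : ℕ) (w : MyW m) : MyW (m+1) := toLex (n, w)

theorem MyW.lt_iff {m : ℕ} (w w' : MyW (m+1)) :
    w < w' ↔ w.fst < w'.fst ∨ w.fst = w'.fst ∧ w.snd < w'.snd :=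
  Prod.Lex.lt_iff (x := (show ℕ ×ₗ MyW m from w)) (y := (show ℕ ×ₗ MyW m from w'))

theorem MyW.type_lt : ∀ m : ℕ,
    Ordinal.type ((· < ·) : MyW m → MyW m → Prop) = Ordinal.omega0 ^ m
  | 0 => by
      rw [pow_zero]
      exact @Ordinal.type_eq_one_of_unique (MyW 0) _ isWellOrder_lt
        (inferInstanceAs (Nonempty PUnit)) (inferInstanceAs (Subsingleton PUnit))
  | m+1 => by
      have h1 : Ordinal.type ((· < ·) : MyW (m+1) → MyW (m+1) → Prop)
          = Ordinal.type (Prod.Lex ((· < ·) : ℕ → ℕ → Prop)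
              ((· < ·) : MyW m → MyW m → Prop)) := rfl
      rw [h1, Ordinal.type_prod_lex, MyW.type_lt m, Ordinal.type_nat_lt, pow_succ]

/-- The range of a strictly monotone map from `MyW m` is well-founded, with the same
ordinal type. -/
theorem range_type (m : ℕ) (g : MyW m → ℝ) (hg : StrictMono g) :
    ∃ hT : (Set.range g).IsWF,
      setOrdinalType (Set.range g) hT = Ordinal.type ((· < ·) : MyW m → MyW m → Prop) := by
  have iso : MyW m ≃o Set.range g := StrictMono.orderIso g hg
  have hwf : WellFounded ((· < ·) : Set.range g → Set.range g → Prop) :=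
    iso.toRelIsoLT.symm.toRelEmbedding.wellFounded IsWellFounded.wf
  refine ⟨hwf, ?_⟩
  letI : WellFoundedLT (Set.range g) := ⟨hwf⟩
  unfold setOrdinalType
  exact Ordinal.type_eq.2 ⟨iso.toRelIsoLT.symm⟩

/-- Key analytic construction. -/
theorem build (A : Set ℝ) (x : ℝ) (a : ℕ → ℝ) (haA : ∀ n, a n ∈ A) (hlt : ∀ n, a n < x)
    (hmono : StrictMono a) (hclose : ∀ ε : ℝ, 0 < ε → ∃ n, x - a n < ε) :
    ∀ (m : ℕ) (ε : ℝ), 0 < ε → ∃ g : MyW (m+1) → ℝ, StrictMono g ∧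
      (∀ w, ∃ f : Fin (m+1) → ℝ, (∀ i, f i ∈ A) ∧ g w = ∑ i, f i) ∧
      (∀ w, ((m : ℝ)+1) * x - ε < g w ∧ g w < ((m : ℝ)+1) * x) := by
  intro m
  induction m with
  | zero =>
    intro ε hε
    obtain ⟨n₀, hn₀⟩ := hclose ε hε
    refine ⟨fun w => a (n₀ + w.fst), ?_, ?_, ?_⟩
    · intro w w' h
      rcases (MyW.lt_iff w w').1 h with h1 | ⟨-, h2⟩
      · exact hmono (by omega)
      · haveI : Subsingleton (MyW 0) := inferInstanceAs (Subsingleton PUnit)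
        rw [Subsingleton.elim w.snd w'.snd] at h2
        exact absurd h2 (lt_irrefl _)
    · intro w
      exact ⟨fun _ => a (n₀ + w.fst), fun _ => haA _, by simp [Fin.sum_univ_one]⟩
    · intro w
      have h1 : a n₀ ≤ a (n₀ + w.fst) := hmono.monotone (Nat.le_add_right _ _)
      have h2 := hlt (n₀ + w.fst)
      constructor
      · push_cast
        linarith
      · push_cast
        linarith
  | succ m ih =>
    intro ε hε
    obtain ⟨n₀, hn₀⟩ := hclose (ε/2) (by linarith)
    have hdelta : ∀ n : ℕ, ∃ d : ℝ, 0 < d ∧ d ≤ ε/2 ∧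
        (n ≠ 0 → d ≤ a (n₀+n) - a (n₀+(n-1))) := by
      intro n
      rcases Nat.eq_zero_or_pos n with h | h
      · exact ⟨ε/2, by linarith, le_refl _, fun hn => absurd h hn⟩
      · refine ⟨min (ε/2) (a (n₀+n) - a (n₀+(n-1))), ?_, min_le_left _ _,
          fun _ => min_le_right _ _⟩
        have : a (n₀+(n-1)) < a (n₀+n) := hmono (by omega)
        exact lt_min (by linarith) (by linarith)
    choose δ hδpos hδle hδle2 using hdelta
    have H := fun n => ih (δ n) (hδpos n)
    choose gs h1 h2 h3 using H
    refine ⟨fun w => a (n₀ + w.fst) + gs w.fst w.snd, ?_, ?_, ?_⟩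
    · intro w w' h
      show a (n₀ + w.fst) + gs w.fst w.snd < a (n₀ + w'.fst) + gs w'.fst w'.snd
      rcases (MyW.lt_iff w w').1 h with hfst | ⟨heq, hsnd⟩
      · have hq0 : w'.fst ≠ 0 := by omega
        have e1 := (h3 w.fst w.snd).2
        have e2 := (h3 w'.fst w'.snd).1
        have e3 := hδle2 w'.fst hq0
        have e4 : a (n₀ + w.fst) ≤ a (n₀ + (w'.fst - 1)) := hmono.monotone (by omega)
        linarith
      · rw [heq]
        exact add_lt_add_right (h1 w'.fst hsnd) _
    · intro w
      obtain ⟨f', hf', hef⟩ := h2 w.fst w.snd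
      refine ⟨Fin.cons (a (n₀ + w.fst)) f', ?_, ?_⟩
      · intro i
        refine Fin.cases ?_ ?_ i
        · simpa using haA _
        · intro j
          simpa using hf' j
      · show a (n₀ + w.fst) + gs w.fst w.snd = _
        rw [Fin.sum_cons, hef]
    · intro w
      have b1 := (h3 w.fst w.snd).1
      have b2 := (h3 w.fst w.snd).2
      have c1 : a n₀ ≤ a (n₀ + w.fst) := hmono.monotone (Nat.le_add_right _ _)
      have c2 := hlt (n₀ + w.fst)
      have c3 := hδle w.fst
      constructor
      · push_cast
        linarith
      · push_cast
        linarith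

/-- Let `A` be a well-ordered subset of the nonnegative real numbers which has an accumulation
point in `ℝ`.  For a positive integer `m`, the set
`mA = {x₁ + ⋯ + x_m ∣ x₁, …, x_m ∈ A}` contains a well-ordered subset of ordinal type `ω ^ m`. -/
theorem sums_contain_wellOrdered_subset_of_type_omega_pow
    (A : Set ℝ) (hA : A ⊆ Set.Ici (0 : ℝ)) (hWF : A.IsWF)
    (hacc : ∃ x : ℝ, AccPt x (𝓟 A))
    (m : ℕ) (hm : 0 < m) :
    ∃ T : Set ℝ, T ⊆ {x : ℝ | ∃ f : Fin m → ℝ, (∀ i, f i ∈ A) ∧ x = ∑ i, f i} ∧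
      ∃ hT : T.IsWF, setOrdinalType T hT = Ordinal.omega0 ^ (m : Ordinal) := by
  obtain ⟨x, hx⟩ := hacc
  -- Step 1: points of `A` approach `x` strictly from below.
  have key : ∀ ε : ℝ, 0 < ε → ∃ y, y ∈ A ∧ x - ε < y ∧ y < x := by
    intro ε hε
    have hub : ∃ ε' : ℝ, 0 < ε' ∧ ε' ≤ ε ∧ ∀ y ∈ A, x < y → ¬ y < x + ε' := by
      by_cases hB : (A ∩ Set.Ioi x).Nonempty
      · have hBWF : (A ∩ Set.Ioi x).IsWF := hWF.mono Set.inter_subset_left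
        have hbmem := hBWF.min_mem hB
        have hxb : x < hBWF.min hB := hbmem.2
        refine ⟨min ε (hBWF.min hB - x), lt_min hε (by linarith), min_le_left _ _, ?_⟩
        intro y hyA hxy hcon
        have hby : hBWF.min hB ≤ y := hBWF.min_le hB ⟨hyA, hxy⟩
        have hmin : min ε (hBWF.min hB - x) ≤ hBWF.min hB - x := min_le_right _ _
        linarith
      · exact ⟨ε, hε, le_refl _, fun y hyA hxy _ => hB ⟨y, hyA, hxy⟩⟩
    obtain ⟨ε', hε'0, hε'ε, hub⟩ := hub
    obtain ⟨y, hyU, hyne⟩ := accPt_iff_nhds.1 hx (Set.Ioo (x - ε') (x + ε'))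
      (Ioo_mem_nhds (by linarith) (by linarith))
    have hyA : y ∈ A := hyU.2
    have hy1 : x - ε' < y := hyU.1.1
    have hy2 : y < x + ε' := hyU.1.2
    have hyx : y < x := by
      rcases lt_trichotomy y x with h | h | h
      · exact h
      · exact absurd h hyne
      · exact absurd hy2 (hub y hyA h)
    exact ⟨y, hyA, by linarith, hyx⟩
  -- Step 2: a strictly increasing sequence in `A` approaching `x`.
  obtain ⟨y0, hy0A, -, hy0x⟩ := key 1 one_pos
  have step : ∀ (n : ℕ) (c : {y : ℝ // y ∈ A ∧ y < x}),
      ∃ c' : {y : ℝ // y ∈ A ∧ y < x}, c.1 < c'.1 ∧ x - c'.1 < 1/(n+1) := by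
    intro n c
    have hpos : (0:ℝ) < 1/(n+1) := by positivity
    have hM : max c.1 (x - 1/(n+1)) < x := max_lt c.2.2 (by linarith)
    obtain ⟨z, hzA, hz1, hz2⟩ := key (x - max c.1 (x - 1/(n+1))) (by linarith)
    have hz1' : max c.1 (x - 1/(n+1)) < z := by linarith
    have hle1 := le_max_left c.1 (x - 1/(n+1))
    have hle2 := le_max_right c.1 (x - 1/(n+1))
    refine ⟨⟨z, hzA, hz2⟩, ?_, ?_⟩
    · show c.1 < z
      linarith
    · show x - z < 1/(n+1)
      linarith
  choose F hF1 hF2 using step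
  let seq : ℕ → {y : ℝ // y ∈ A ∧ y < x} :=
    fun n => Nat.rec ⟨y0, hy0A, hy0x⟩ (fun k c => F k c) n
  have haA : ∀ n, (seq n).1 ∈ A := fun n => (seq n).2.1
  have hlt : ∀ n, (seq n).1 < x := fun n => (seq n).2.2
  have hamono : StrictMono (fun n => (seq n).1) :=
    strictMono_nat_of_lt_succ (fun n => hF1 n (seq n))
  have hclose : ∀ ε : ℝ, 0 < ε → ∃ n, x - (seq n).1 < ε := by
    intro ε hε
    obtain ⟨n, hn⟩ := exists_nat_one_div_lt hε
    exact ⟨n+1, lt_trans (hF2 n (seq n)) hn⟩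
  -- Step 3: apply the construction.
  obtain ⟨k, rfl⟩ : ∃ k, m = k + 1 := ⟨m - 1, by omega⟩
  obtain ⟨g, hg, hvals, -⟩ :=
    build A x (fun n => (seq n).1) haA hlt hamono hclose k 1 one_pos
  obtain ⟨hT, hTeq⟩ := range_type (k+1) g hg
  refine ⟨Set.range g, ?_, hT, ?_⟩
  · rintro y ⟨w, rfl⟩
    exact hvals w
  · rw [hTeq, MyW.type_lt, Ordinal.opow_natCast]
end

section
/- Let n, h ∈ ℕ and let S be a subsemigroup under addition of the nonnegative part of ℝ^n equipped with the lexicographic order. Suppose S is well-ordered (for the lexicographic order) of ordinal type ≤ ω^h. Then S has no accumulation point in ℝ^n for the Euclidean topology. -/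
open Filter

/-- The lexicographic linear order on `ℝ^n`. -/
noncomputable instance lexPiRealLinearOrder (n : ℕ) : LinearOrder (Lex (Fin n → ℝ)) :=
  @Pi.Lex.linearOrder (Fin n) (fun _ => ℝ)
    inferInstance (inferInstanceAs (WellFoundedLT (Fin n))) (fun _ => inferInstance)

/-- Lexicographic relation on tuples indexed by `Fin k`, smaller index more significant. -/
abbrev PLex {k : ℕ} {β : Type*} [LT β] (a b : Fin k → β) : Prop :=
  Pi.Lex (· < ·) (@fun _ => (· < ·)) a b

instance plexIsWellOrder (k : ℕ) : IsWellOrder (Fin k → ℕ) PLex where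
  trichotomous := (Pi.isTrichotomous_lex _ _
    (IsWellFounded.wf (r := ((· < ·) : Fin k → Fin k → Prop)))).trichotomous
  wf := Pi.Lex.wellFounded (· < ·) fun _ => wellFounded_lt

theorem lt_iff_plex {n : ℕ} {a b : Fin n → ℝ} : toLex a < toLex b ↔ PLex a b := Iff.rfl

theorem plex_cons_iff {k : ℕ} {β : Type*} [LinearOrder β] {m m' : Fin (k + 1) → β} :
    PLex m m' ↔ m 0 < m' 0 ∨ (m 0 = m' 0 ∧ PLex (Fin.tail m) (Fin.tail m')) := by
  constructor
  · rintro ⟨i, hj, hi⟩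
    rcases Fin.eq_zero_or_eq_succ i with rfl | ⟨i', rfl⟩
    · exact Or.inl hi
    · exact Or.inr ⟨hj 0 (Fin.succ_pos i'), i',
        fun j hji => hj j.succ (Fin.succ_lt_succ_iff.2 hji), hi⟩
  · rintro (h | ⟨h0, i', hj, hi⟩)
    · exact ⟨0, fun j hj => absurd hj (Fin.not_lt_zero j), h⟩
    · refine ⟨i'.succ, fun j hji => ?_, hi⟩
      rcases Fin.eq_zero_or_eq_succ j with rfl | ⟨j', rfl⟩
      · exact h0
      · exact hj j' (Fin.succ_lt_succ_iff.1 hji)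

/-- The ordinal type of `ℕ^k` in the lexicographic order is `ω ^ k`. -/
theorem type_plex (k : ℕ) :
    Ordinal.type (PLex (k := k) (β := ℕ)) = Ordinal.omega0 ^ (k : Ordinal) := by
  induction k with
  | zero =>
    rw [Nat.cast_zero, Ordinal.opow_zero]
    exact Ordinal.type_eq_one_of_unique _
  | succ k ih =>
    have iso : PLex (k := k + 1) (β := ℕ) ≃r
        Prod.Lex ((· < ·) : ℕ → ℕ → Prop) (PLex (k := k) (β := ℕ)) :=
      { toFun := fun m => (m 0, Fin.tail m)
        invFun := fun p => Fin.cons p.1 p.2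
        left_inv := fun m => Fin.cons_self_tail m
        right_inv := fun p => by simp
        map_rel_iff' := by
          intro a b
          rw [Prod.lex_def]
          exact plex_cons_iff.symm }
    rw [Ordinal.type_eq.2 ⟨iso⟩, Ordinal.type_prod_lex, Ordinal.type_nat_lt, ih,
      Nat.cast_succ, Ordinal.opow_add, Ordinal.opow_one]

/-- Extraction of a subsequence which is constant before some coordinate `i` and strictly
increasing at coordinate `i`. -/
theorem exists_const_prefix (n : ℕ) :
    ∀ (r d : ℕ), n - d ≤ r → ∀ w : ℕ → (Fin n → ℝ),
      StrictMono (fun j => toLex (w j)) →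
      (∀ j (l : Fin n), (l : ℕ) < d → w j l = w 0 l) →
      ∃ (i : Fin n) (φ : ℕ → ℕ), StrictMono φ ∧
        (∀ j (l : Fin n), l < i → w (φ j) l = w (φ 0) l) ∧
        StrictMono (fun j => w (φ j) i) := by
  intro r
  induction r with
  | zero =>
    intro d hd w hmono hconst
    exact absurd (congrArg toLex (funext fun l => hconst 1 l (by omega)))
      (hmono Nat.zero_lt_one).ne'
  | succ r ih =>
    intro d hd w hmono hconst
    by_cases hdn : n ≤ d
    · exact absurd (congrArg toLex (funext fun l => hconst 1 l (by omega)))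
        (hmono Nat.zero_lt_one).ne'
    · set c : Fin n := ⟨d, by omega⟩ with hc
      have hcmono : Monotone fun j => w j c := by
        intro j j' hj
        by_contra hn
        push_neg at hn
        have hlex : toLex (w j') < toLex (w j) :=
          lt_iff_plex.2 ⟨c, fun l hl =>
            (hconst j' l (by simpa [Fin.lt_def, hc] using hl)).trans
              (hconst j l (by simpa [Fin.lt_def, hc] using hl)).symm, hn⟩
        rcases hj.lt_or_eq with h1 | rfl
        · exact absurd hlex (lt_asymm (hmono h1))
        · exact lt_irrefl _ hlex
      by_cases hec : ∃ N, ∀ j, N ≤ j → w j c = w N c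
      · obtain ⟨N, hN⟩ := hec
        obtain ⟨i, φ', h1, h2, h3⟩ := ih (d + 1) (by omega) (fun j => w (j + N))
          (hmono.comp fun a b hab => Nat.add_lt_add_right hab N)
          (by
            intro j l hl
            show w (j + N) l = w (0 + N) l
            rcases Nat.lt_or_ge (l : ℕ) d with h | h
            · rw [hconst (j + N) l h, hconst (0 + N) l h]
            · have hld : (l : ℕ) = d := by omega
              have hlc : l = c := Fin.ext (by simp [hc, hld])
              rw [hlc, hN (j + N) (by omega), hN (0 + N) (by omega)])
        exact ⟨i, fun j => φ' j + N, fun a b hab => Nat.add_lt_add_right (h1 hab) N,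
          fun j l hl => h2 j l hl, h3⟩
      · push_neg at hec
        choose ψ hψa hψb using hec
        set φ : ℕ → ℕ := fun j => ψ^[j] 0 with hφ
        have hit : ∀ j, φ (j + 1) = ψ (φ j) := fun j => Function.iterate_succ_apply' ψ j 0
        have hstep : ∀ j, φ j < φ (j + 1) ∧ w (φ j) c < w (φ (j + 1)) c := by
          intro j
          rw [hit j]
          constructor
          · exact lt_of_le_of_ne (hψa (φ j)) fun heq => hψb (φ j) (by rw [← heq])
          · exact (hcmono (hψa (φ j))).lt_of_ne (hψb (φ j)).symm
        exact ⟨c, φ, strictMono_nat_of_lt_succ fun j => (hstep j).1,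
          fun j l hl => (hconst (φ j) l (by simpa [Fin.lt_def, hc] using hl)).trans
            (hconst (φ 0) l (by simpa [Fin.lt_def, hc] using hl)).symm,
          strictMono_nat_of_lt_succ fun j => (hstep j).2⟩

/-- The key recursive construction: inside a subsemigroup containing a suitable sequence,
an order-embedded copy of `ℕ^(k+1)` (lexicographically), realised at coordinate `istar`. -/
theorem rec_lemma {n : ℕ} {S : Set (Fin n → ℝ)}
    (hadd : ∀ x ∈ S, ∀ y ∈ S, x + y ∈ S)
    (t : ℕ → Fin n → ℝ) (istar : Fin n) (L : ℝ)
    (htS : ∀ j, t j ∈ S)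
    (hpre : ∀ j (l : Fin n), l < istar → t j l = t 0 l)
    (hamono : StrictMono fun j => t j istar)
    (haL : ∀ j, t j istar < L)
    (htail : ∀ ε : ℝ, 0 < ε → ∃ M : ℕ, ∀ j, M ≤ j → L - ε < t j istar) :
    ∀ k : ℕ, ∃ F : (Fin (k + 1) → ℕ) → Fin n → ℝ,
      (∀ m (l : Fin n), l < istar → F m l = ((k : ℝ) + 1) * t 0 l) ∧
      (∀ m, F m ∈ S) ∧
      (∀ m m', PLex m m' → F m istar < F m' istar) ∧
      (∀ m, F m istar < ((k : ℝ) + 1) * L) ∧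
      (∀ ε : ℝ, 0 < ε → ∃ Mb : ℕ, ∀ m : Fin (k + 1) → ℕ, Mb ≤ m 0 →
        ((k : ℝ) + 1) * L - ε < F m istar) := by
  intro k
  induction k with
  | zero =>
    refine ⟨fun m => t (m 0), ?_, ?_, ?_, ?_, ?_⟩
    · intro m l hl
      show t (m 0) l = _
      rw [hpre (m 0) l hl]; push_cast; ring
    · intro m; exact htS _
    · intro m m' hmm'
      rcases plex_cons_iff.1 hmm' with hlt | ⟨-, hT⟩
      · exact hamono hlt
      · rcases hT with ⟨i, -⟩; exact i.elim0
    · intro m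
      show t (m 0) istar < _
      have := haL (m 0); push_cast; linarith
    · intro ε hε
      obtain ⟨M, hM⟩ := htail ε hε
      refine ⟨M, fun m hm => ?_⟩
      show _ < t (m 0) istar
      have := hM (m 0) hm; push_cast; linarith
  | succ k ih =>
    obtain ⟨F, hP0, hP1, hP2, hP3, hP4⟩ := ih
    have hMsh : ∀ p : ℕ, ∃ Mb : ℕ, ∀ m : Fin (k + 1) → ℕ, Mb ≤ m 0 →
        ((k : ℝ) + 1) * L - (t (p + 1) istar - t p istar) < F m istar :=
      fun p => hP4 _ (sub_pos.2 (hamono (Nat.lt_succ_self p)))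
    choose Msh hMshspec using hMsh
    set sh : (Fin (k + 2) → ℕ) → (Fin (k + 1) → ℕ) :=
      fun m i => Fin.tail m i + if i = 0 then Msh (m 0) else 0 with hsh
    have hsh0 : ∀ m, sh m 0 = Fin.tail m 0 + Msh (m 0) := fun m => by simp [hsh]
    have hshtail : ∀ m : Fin (k + 2) → ℕ, Fin.tail (sh m) = Fin.tail (Fin.tail m) := by
      intro m
      funext i
      simp [hsh, Fin.tail, Fin.succ_ne_zero]
    have key : ∀ m : Fin (k + 2) → ℕ,
        t (m 0) istar + ((k : ℝ) + 1) * L < t (m 0 + 1) istar + F (sh m) istar := by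
      intro m
      have h1 := hMshspec (m 0) (sh m) (by rw [hsh0]; omega)
      linarith
    refine ⟨fun m => t (m 0 + 1) + F (sh m), ?_, ?_, ?_, ?_, ?_⟩
    · intro m l hl
      show t (m 0 + 1) l + F (sh m) l = _
      rw [hpre (m 0 + 1) l hl, hP0 (sh m) l hl]
      push_cast; ring
    · intro m; exact hadd _ (htS _) _ (hP1 _)
    · intro m m' hmm'
      show t (m 0 + 1) istar + F (sh m) istar < t (m' 0 + 1) istar + F (sh m') istar
      rcases plex_cons_iff.1 hmm' with hlt | ⟨heq, hT⟩
      · have h1 := hP3 (sh m)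
        have h2 : t (m 0 + 1) istar ≤ t (m' 0) istar := hamono.monotone (by omega)
        have h3 := key m'
        linarith
      · have hshlt : PLex (sh m) (sh m') := by
          rcases plex_cons_iff.1 hT with h1 | ⟨h1, h2⟩
          · refine plex_cons_iff.2 (Or.inl ?_)
            rw [hsh0, hsh0, heq]
            exact Nat.add_lt_add_right h1 _
          · refine plex_cons_iff.2 (Or.inr ⟨?_, ?_⟩)
            · rw [hsh0, hsh0, heq, h1]
            · rw [hshtail, hshtail]; exact h2
        have h1 := hP2 _ _ hshlt
        rw [heq]
        linarith
    · intro m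
      have h1 := hP3 (sh m)
      have h2 := haL (m 0 + 1)
      show t (m 0 + 1) istar + F (sh m) istar < _
      push_cast; linarith
    · intro ε hε
      obtain ⟨M, hM⟩ := htail ε hε
      refine ⟨M, fun m hm => ?_⟩
      have h1 := key m
      have h2 := hM (m 0) hm
      show _ < t (m 0 + 1) istar + F (sh m) istar
      push_cast; linarith

/-- Endgame: an embedded copy of `ℕ^h` strictly below an element of `S` forces the
ordinal type of `S` to exceed `ω ^ h`. -/
theorem endgame {n : ℕ} (S : Set (Fin n → ℝ))
    (hWF : (toLex '' S : Set (Lex (Fin n → ℝ))).IsWF) (h : ℕ)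
    (G : (Fin h → ℕ) → Fin n → ℝ) (sstar : Fin n → ℝ)
    (hGS : ∀ m, G m ∈ S) (hs : sstar ∈ S)
    (hmono : ∀ m m', PLex m m' → toLex (G m) < toLex (G m'))
    (hlt : ∀ m, toLex (G m) < toLex sstar) :
    Ordinal.omega0 ^ (h : Ordinal) < setOrdinalType (toLex '' S) hWF := by
  letI : WellFoundedLT (toLex '' S : Set (Lex (Fin n → ℝ))) := ⟨hWF⟩
  set T := (toLex '' S : Set (Lex (Fin n → ℝ))) with hT
  let sstarT : T := ⟨toLex sstar, sstar, hs, rfl⟩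
  have key : Ordinal.omega0 ^ (h : Ordinal) ≤
      (Ordinal.typein ((· < ·) : T → T → Prop)).toRelEmbedding sstarT := by
    rw [← type_plex h, ← Ordinal.type_subrel]
    haveI : IsAsymm _ (Subrel ((· < ·) : T → T → Prop) {b | b < sstarT}) :=
      ⟨fun a b h1 h2 => absurd h1 (lt_asymm h2)⟩
    haveI : IsWellOrder ↥{b : T | b < sstarT} (Subrel ((· < ·) : T → T → Prop) {b | b < sstarT}) :=
      { wf := (Subrel.relEmbedding _ _).isWellFounded.wf, trichotomous := (Subrel.relEmbedding _ _).isTrichotomous.trichotomous }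
    have hfm : ∀ m : Fin h → ℕ, (⟨toLex (G m), G m, hGS m, rfl⟩ : T) ∈ {b : T | b < sstarT} :=
      fun m => hlt m
    let f : (Fin h → ℕ) → ↥{b : T | b < sstarT} := fun m => ⟨⟨toLex (G m), G m, hGS m, rfl⟩, hfm m⟩
    have hmonof : ∀ a b, PLex a b →
        Subrel ((· < ·) : T → T → Prop) {b | b < sstarT} (f a) (f b) :=
      fun a b hab => hmono a b hab
    exact (RelEmbedding.ofMonotone f hmonof).ordinal_type_le
  exact lt_of_le_of_lt key (Ordinal.typein_lt_type _ sstarT)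

/-- Let `S` be a subsemigroup (under addition) of the nonnegative part of `ℝ^n` with the
lexicographic order, which is well ordered (for the lexicographic order) of ordinal type
`≤ ω ^ h`.  Then `S` has no accumulation point in `ℝ^n` for the Euclidean topology. -/
theorem no_accumulation_point_of_wellOrdered_subsemigroup
    (n h : ℕ) (S : Set (Fin n → ℝ))
    (hadd : ∀ x ∈ S, ∀ y ∈ S, x + y ∈ S)
    (hnonneg : ∀ x ∈ S, toLex (0 : Fin n → ℝ) ≤ toLex x)
    (hWF : (toLex '' S : Set (Lex (Fin n → ℝ))).IsWF)
    (hord : setOrdinalType (toLex '' S : Set (Lex (Fin n → ℝ))) hWF ≤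
      Ordinal.omega0 ^ (h : Ordinal)) :
    ∀ x : Fin n → ℝ, ¬ AccPt x (𝓟 S) := by
  intro x hacc
  -- Step 1: `S` has infinitely many points in the unit ball around `x`.
  have hBinf : (S ∩ Metric.ball x 1).Infinite := by
    by_contra hfin
    rw [Set.not_infinite] at hfin
    have hD : ((S ∩ Metric.ball x 1) \ {x}).Finite := hfin.diff
    have hxD : x ∉ (S ∩ Metric.ball x 1) \ {x} := fun hmem => hmem.2 rfl
    have hU : ((S ∩ Metric.ball x 1) \ {x})ᶜ ∩ Metric.ball x 1 ∈ nhds x :=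
      Filter.inter_mem (hD.isClosed.compl_mem_nhds hxD) (Metric.ball_mem_nhds x one_pos)
    obtain ⟨y, ⟨⟨hyC, hyBall⟩, hyS⟩, hyne⟩ := (accPt_iff_nhds (x := x) (C := S)).1 hacc _ hU
    exact hyC ⟨⟨hyS, hyBall⟩, by simpa using hyne⟩
  -- Step 2: a strictly lex-increasing sequence in `S ∩ ball x 1`.
  have hWFB : (toLex '' (S ∩ Metric.ball x 1) : Set (Lex (Fin n → ℝ))).IsWF :=
    hWF.mono (Set.image_mono Set.inter_subset_left)
  set e := hBinf.natEmbedding with he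
  obtain ⟨g, hg⟩ := hWFB.isPWO.exists_monotone_subseq
    (f := fun j => toLex ((e j : Fin n → ℝ))) (fun j => ⟨(e j : Fin n → ℝ), (e j).2, rfl⟩)
  set w : ℕ → Fin n → ℝ := fun j => (e (g j) : Fin n → ℝ) with hw
  have hwmono : StrictMono fun j => toLex (w j) := by
    have hmonot : Monotone fun j => toLex (w j) := fun a b hab => hg hab
    refine hmonot.strictMono_of_injective ?_
    intro a b hab
    have h1 : w a = w b := toLex.injective hab
    have h2 : e (g a) = e (g b) := Subtype.ext h1
    exact g.injective (e.injective h2)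
  have hwB : ∀ j, w j ∈ S ∩ Metric.ball x 1 := fun j => (e (g j)).2
  -- Step 3: extraction of the special subsequence `t`.
  obtain ⟨istar, φ, hφmono, hpre0, hamono0⟩ :=
    exists_const_prefix n n 0 (by omega) w hwmono (fun j l hl => absurd hl (Nat.not_lt_zero _))
  set t : ℕ → Fin n → ℝ := fun j => w (φ j) with ht
  have htS : ∀ j, t j ∈ S := fun j => (hwB (φ j)).1
  have hpre : ∀ j (l : Fin n), l < istar → t j l = t 0 l := fun j l hl => hpre0 j l hl
  have hamono : StrictMono fun j => t j istar := fun a b hab => hamono0 hab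
  have hub : ∀ j, t j istar ≤ x istar + 1 := by
    intro j
    have hball : dist (t j) x < 1 := by
      have := (hwB (φ j)).2
      rwa [Metric.mem_ball] at this
    have hle := dist_le_pi_dist (t j) x istar
    have h2 : |t j istar - x istar| < 1 := by
      rw [← Real.dist_eq]; exact lt_of_le_of_lt hle hball
    linarith [(abs_lt.1 h2).2]
  set L : ℝ := sSup (Set.range fun j => t j istar) with hLdef
  have hbdd : BddAbove (Set.range fun j => t j istar) :=
    ⟨x istar + 1, by rintro _ ⟨j, rfl⟩; exact hub j⟩
  have haL : ∀ j, t j istar < L := fun j =>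
    lt_of_lt_of_le (hamono (Nat.lt_succ_self j)) (le_csSup hbdd ⟨j + 1, rfl⟩)
  have htail : ∀ ε : ℝ, 0 < ε → ∃ M : ℕ, ∀ j, M ≤ j → L - ε < t j istar := by
    intro ε hε
    obtain ⟨v, ⟨M, rfl⟩, hv⟩ := exists_lt_of_lt_csSup (Set.range_nonempty _)
      (show L - ε < L by linarith)
    exact ⟨M, fun j hj => lt_of_lt_of_le hv (hamono.monotone hj)⟩
  -- Step 4: conclude, splitting on `h`.
  rcases h with _ | k
  · refine absurd hord (not_le.2 ?_)
    exact endgame S hWF 0 (fun _ => t 0) (t 1) (fun _ => htS 0) (htS 1)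
      (fun m m' hmm' => by rcases hmm' with ⟨i, -, -⟩; exact i.elim0)
      (fun m => lt_iff_plex.2 ⟨istar,
        fun l hl => (hpre 0 l hl).trans (hpre 1 l hl).symm, hamono Nat.zero_lt_one⟩)
  · obtain ⟨F, hP0, hP1, hP2, hP3, hP4⟩ :=
      rec_lemma hadd t istar L htS hpre hamono haL htail k
    obtain ⟨Mb, hMb⟩ := hP4 (t 1 istar - t 0 istar) (sub_pos.2 (hamono Nat.zero_lt_one))
    set m₀ : Fin (k + 1) → ℕ := fun _ => Mb with hm₀
    set sstar : Fin n → ℝ := t 1 + F m₀ with hsstar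
    have hsstarS : sstar ∈ S := hadd _ (htS 1) _ (hP1 m₀)
    have hFm₀ : ((k : ℝ) + 1) * L - (t 1 istar - t 0 istar) < F m₀ istar := hMb m₀ le_rfl
    have hGmono : ∀ m m', PLex m m' → toLex (F m) < toLex (F m') := fun m m' hmm' =>
      lt_iff_plex.2 ⟨istar, fun l hl => by rw [hP0 m l hl, hP0 m' l hl], hP2 m m' hmm'⟩
    have hGlt : ∀ m, toLex (F m) < toLex sstar := by
      intro m
      by_cases hc : ∀ l : Fin n, l < istar → t 0 l = 0
      · have ha0 : 0 ≤ t 0 istar := by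
          rcases (hnonneg (t 0) (htS 0)).lt_or_eq with hlt0 | heq0
          · obtain ⟨i, hj, hi⟩ := lt_iff_plex.1 hlt0
            rcases lt_trichotomy i istar with h1 | h1 | h1
            · have hi' : 0 < t 0 i := by simpa using hi
              exact absurd (hc i h1) hi'.ne'
            · subst h1; simpa using hi.le
            · exact le_of_eq (by simpa using hj istar h1)
          · have h1 : t 0 = 0 := (toLex.injective heq0).symm
            simp [h1]
        refine lt_iff_plex.2 ⟨istar, ?_, ?_⟩
        · intro l hl
          show F m l = t 1 l + F m₀ l
          rw [hP0 m l hl, hP0 m₀ l hl, hpre 1 l hl, hc l hl]; ring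
        · show F m istar < t 1 istar + F m₀ istar
          have h3 := hP3 m
          linarith
      · push_neg at hc
        obtain ⟨l1, hl1i, hl1ne⟩ := hc
        obtain ⟨l0, hl0mem, hl0min⟩ := WellFounded.has_min wellFounded_lt
          {l : Fin n | l < istar ∧ t 0 l ≠ 0} ⟨l1, hl1i, hl1ne⟩
        obtain ⟨hl0i, hl0ne⟩ := hl0mem
        have hzero : ∀ j : Fin n, j < l0 → t 0 j = 0 := by
          intro j hj
          by_contra hne
          exact hl0min j ⟨hj.trans hl0i, hne⟩ hj
        have hpos : 0 < t 0 l0 := by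
          rcases (hnonneg (t 0) (htS 0)).lt_or_eq with hlt0 | heq0
          · obtain ⟨i, hj, hi⟩ := lt_iff_plex.1 hlt0
            rcases lt_trichotomy i l0 with h1 | h1 | h1
            · have hi' : 0 < t 0 i := by simpa using hi
              exact absurd (hzero i h1) hi'.ne'
            · subst h1; simpa using hi
            · have h2 : t 0 l0 = 0 := by simpa using (hj l0 h1).symm
              exact absurd h2 hl0ne
          · have h2 : t 0 l0 = 0 := by
              have h3 : t 0 = 0 := (toLex.injective heq0).symm
              simp [h3]
            exact absurd h2 hl0ne
        refine lt_iff_plex.2 ⟨l0, ?_, ?_⟩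
        · intro j hj
          have hji : j < istar := hj.trans hl0i
          show F m j = t 1 j + F m₀ j
          rw [hP0 m j hji, hP0 m₀ j hji, hpre 1 j hji, hzero j hj]; ring
        · show F m l0 < t 1 l0 + F m₀ l0
          rw [hP0 m l0 hl0i, hP0 m₀ l0 hl0i, hpre 1 l0 hl0i]
          linarith
    exact absurd hord (not_le.2 (endgame S hWF (k + 1) F sstar hP1 hsstarS hGmono hGlt))
end

section
/- Let n, h ∈ ℕ and let S be a subsemigroup under addition of the nonnegative part of ℝ^n equipped with the lexicographic order. Suppose S is well-ordered (for the lexicographic order) of ordinal type ≤ ω^h. Then the ordinal type of S is ≤ ω^n. -/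
set_option maxRecDepth 8000

open Filter

noncomputable instance lexPiNatLinearOrder (n : ℕ) : LinearOrder (Lex (Fin n → ℕ)) :=
  @Pi.Lex.linearOrder (Fin n) (fun _ => ℕ)
    inferInstance (inferInstanceAs (WellFoundedLT (Fin n))) (fun _ => inferInstance)

namespace SemigroupOrd

/-- raw lexicographic relation on tuples -/
abbrev PLex {α : Type*} [LinearOrder α] {d : ℕ} (x y : Fin d → α) : Prop :=
  Pi.Lex (· < ·) (@fun _ a b => a < b) x y

theorem real_toLex_lt {d : ℕ} {x y : Fin d → ℝ} : toLex x < toLex y ↔ PLex x y := Iff.rfl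

theorem nat_toLex_lt {d : ℕ} {x y : Fin d → ℕ} : toLex x < toLex y ↔ PLex x y := Iff.rfl

section LexLemmas
variable {α : Type*} [LinearOrder α] {d : ℕ}

theorem plex_of_head {x y : Fin (d + 1) → α} (h : x 0 < y 0) : PLex x y :=
  ⟨0, fun j hj => absurd hj (by simp), h⟩

theorem plex_cons (c : α) {u v : Fin d → α} (h : PLex u v) :
    PLex (Fin.cons c u) (Fin.cons c v) := by
  obtain ⟨i, hj, hi⟩ := h
  refine ⟨i.succ, fun j => Fin.cases (fun _ => rfl) (fun k hk => ?_) j, by simpa using hi⟩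
  simp only [Fin.cons_succ]
  exact hj k (by simpa using hk)

theorem plex_dest {x y : Fin (d + 1) → α} (h : PLex x y) :
    x 0 < y 0 ∨ (x 0 = y 0 ∧ PLex (Fin.tail x) (Fin.tail y)) := by
  obtain ⟨i, hj, hi⟩ := h
  rcases Fin.eq_zero_or_eq_succ i with rfl | ⟨k, rfl⟩
  · exact Or.inl hi
  · exact Or.inr ⟨hj 0 (Fin.succ_pos k),
      ⟨k, fun j hj' => hj j.succ (by simpa using hj'), hi⟩⟩

end LexLemmas

/-- A set is well-founded with ordinal type at most `c`. -/
def obnd {β : Type*} [LinearOrder β] (W : Set β) (c : Ordinal) : Prop :=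
  ∃ hW : W.IsWF, setOrdinalType W hW ≤ c

theorem obnd_of_strictMono {β γ : Type} [LinearOrder β] [LinearOrder γ]
    {A : Set β} {B : Set γ} {c : Ordinal} (hB : obnd B c) (f : A → B)
    (hf : ∀ a a', a < a' → f a < f a') : obnd A c := by
  obtain ⟨hBwf, hBle⟩ := hB
  have hwfB : WellFounded ((· < ·) : B → B → Prop) := hBwf
  have hAwf : WellFounded ((· < ·) : A → A → Prop) :=
    Subrelation.wf (fun {a b} h => hf a b h) (InvImage.wf f hwfB)
  have hAwf' : A.IsWF := hAwf
  refine ⟨hAwf', ?_⟩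
  letI : WellFoundedLT A := ⟨hAwf'⟩
  letI : WellFoundedLT B := ⟨hBwf⟩
  refine le_trans ?_ hBle
  exact Ordinal.type_le_iff'.2 ⟨RelEmbedding.ofMonotone f hf⟩

theorem obnd_subset {β : Type} [LinearOrder β] {A B : Set β} {c : Ordinal}
    (hAB : A ⊆ B) (hB : obnd B c) : obnd A c :=
  obnd_of_strictMono hB (Set.inclusion hAB) (fun _ _ h => h)

theorem mem_toLex_image {d : ℕ} {A : Set (Fin d → ℝ)} {w : Lex (Fin d → ℝ)} :
    w ∈ toLex '' A ↔ ofLex w ∈ A := by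
  constructor
  · rintro ⟨v, hv, rfl⟩; exact hv
  · intro hw; exact ⟨ofLex w, hw, rfl⟩

/-- staircase index function -/
def Rfun {m : ℕ} (a : Fin m → ℕ) (i : Fin m) : ℕ :=
  (i : ℕ) + ∑ j ∈ Finset.univ.filter (fun j : Fin m => j ≤ i), a j

theorem Rfun_mono {m : ℕ} (a : Fin m → ℕ) {i i' : Fin m} (h : i ≤ i') :
    Rfun a i ≤ Rfun a i' := by
  refine Nat.add_le_add h ?_
  refine Finset.sum_le_sum_of_subset ?_
  exact Finset.monotone_filter_right _ (fun j _ hj => le_trans hj h)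

theorem Rfun_congr {m : ℕ} {a a' : Fin m → ℕ} {i₀ : Fin m}
    (hag : ∀ j, j < i₀ → a j = a' j) {i : Fin m} (hi : i < i₀) :
    Rfun a i = Rfun a' i := by
  unfold Rfun
  congr 1
  refine Finset.sum_congr rfl fun j hj => ?_
  simp only [Finset.mem_filter] at hj
  exact hag j (lt_of_le_of_lt hj.2 hi)

theorem Rfun_lt {m : ℕ} {a a' : Fin m → ℕ} {i₀ : Fin m}
    (hag : ∀ j, j < i₀ → a j = a' j) (hlt : a i₀ < a' i₀) :
    Rfun a i₀ < Rfun a' i₀ := by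
  unfold Rfun
  refine Nat.add_lt_add_left ?_ _
  refine Finset.sum_lt_sum (fun j hj => ?_) ⟨i₀, ?_, hlt⟩
  · simp only [Finset.mem_filter] at hj
    rcases lt_or_eq_of_le hj.2 with h | h
    · exact (hag j h).le
    · exact h ▸ hlt.le
  · simp

theorem engine_main (m : ℕ) (t : ℕ → ℝ) (ht : StrictMono t) {b : ℝ} (hb : ∀ k, t k ≤ b) :
    ∃ ν : (Fin (m + 1) → ℕ) → Fin (m + 1) → ℕ,
      ∀ a a' : Fin (m + 1) → ℕ, PLex a a' →
        (∑ i, t (ν a i)) < (∑ i, t (ν a' i)) := by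
  set L := sSup (Set.range t) with hL
  have hbdd : BddAbove (Set.range t) := ⟨b, by rintro _ ⟨k, rfl⟩; exact hb k⟩
  have hlt : ∀ k, t k < L := fun k =>
    lt_of_lt_of_le (ht (Nat.lt_succ_self k)) (le_csSup hbdd ⟨k + 1, rfl⟩)
  have happrox : ∀ e : ℝ, 0 < e → ∃ k, L - e < t k := by
    intro e he
    obtain ⟨_, ⟨k, rfl⟩, hk⟩ := exists_lt_of_lt_csSup (Set.range_nonempty t)
      (by linarith : L - e < L)
    exact ⟨k, hk⟩
  set M : ℝ := 2 * ((m : ℝ) + 1) with hMdef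
  have hM : 0 < M := by positivity
  have hM1 : 1 ≤ M := by
    have : (0:ℝ) ≤ (m:ℝ) := Nat.cast_nonneg m
    rw [hMdef]; linarith
  have hg : ∀ k : ℕ, ∃ k', L - t k' < (L - t k) / M := by
    intro k
    have hpos : 0 < (L - t k) / M := div_pos (by linarith [hlt k]) hM
    obtain ⟨k', hk'⟩ := happrox _ hpos
    exact ⟨k', by linarith⟩
  choose g hgs using hg
  set u : ℕ → ℕ := fun j => g^[j] 0 with hu
  set ε : ℕ → ℝ := fun j => L - t (u j) with hε
  have hεpos : ∀ j, 0 < ε j := fun j => by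
    simp only [hε]; linarith [hlt (u j)]
  have hεstep : ∀ j, ε (j + 1) < ε j / M := by
    intro j
    have h1 : u (j + 1) = g (u j) := Function.iterate_succ_apply' g j 0
    simpa [hε, h1] using hgs (u j)
  have hεmono : ∀ {j j' : ℕ}, j ≤ j' → ε j' ≤ ε j := by
    intro j j' hjj
    induction j', hjj using Nat.le_induction with
    | base => exact le_refl _
    | succ j' hj ih =>
      refine le_trans (le_of_lt (lt_of_lt_of_le (hεstep j') ?_)) ih
      exact div_le_self (hεpos j').le hM1
  have hgap : ∀ {j j' : ℕ}, j < j' → ε j' < ε j / M := fun {j j'} h =>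
    lt_of_le_of_lt (hεmono (Nat.succ_le_of_lt h)) (hεstep j)
  refine ⟨fun a i => u (Rfun a i), ?_⟩
  rintro a a' ⟨i₀, hag, hi₀⟩
  have hts : ∀ k, t (u k) = L - ε k := fun k => by simp [hε]
  have main : ∑ i, ε (Rfun a' i) < ∑ i, ε (Rfun a i) := by
    rw [← Finset.sum_filter_add_sum_filter_not Finset.univ (fun i => i < i₀)
        (fun i => ε (Rfun a' i)),
      ← Finset.sum_filter_add_sum_filter_not Finset.univ (fun i => i < i₀)
        (fun i => ε (Rfun a i))]
    have eqlow : ∑ i ∈ Finset.univ.filter (fun i => i < i₀), ε (Rfun a' i)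
        = ∑ i ∈ Finset.univ.filter (fun i => i < i₀), ε (Rfun a i) := by
      refine Finset.sum_congr rfl fun i hi => ?_
      simp only [Finset.mem_filter] at hi
      rw [Rfun_congr hag hi.2]
    rw [eqlow]
    have hhigh : ∑ i ∈ Finset.univ.filter (fun i => ¬ i < i₀), ε (Rfun a' i)
        < ∑ i ∈ Finset.univ.filter (fun i => ¬ i < i₀), ε (Rfun a i) := by
      have hRlt : ∀ i : Fin (m + 1), ¬ i < i₀ → Rfun a i₀ < Rfun a' i := fun i hi =>
        lt_of_lt_of_le (Rfun_lt hag hi₀) (Rfun_mono a' (not_lt.1 hi))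
      set e₀ : ℝ := ε (Rfun a i₀) with he₀
      have h1 : ∑ i ∈ Finset.univ.filter (fun i => ¬ i < i₀), ε (Rfun a' i)
          ≤ (Finset.univ.filter (fun i : Fin (m+1) => ¬ i < i₀)).card • (e₀ / M) := by
        refine Finset.sum_le_card_nsmul _ _ _ fun i hi => ?_
        simp only [Finset.mem_filter] at hi
        exact (hgap (hRlt i hi.2)).le
      have hcard : (Finset.univ.filter (fun i : Fin (m+1) => ¬ i < i₀)).card ≤ m + 1 := by
        refine le_trans (Finset.card_filter_le _ _) ?_
        simp
      have h5 : 0 < e₀ := hεpos _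
      have h2 : ((Finset.univ.filter (fun i : Fin (m+1) => ¬ i < i₀)).card : ℝ) * (e₀ / M)
          ≤ ((m : ℝ) + 1) * (e₀ / M) := by
        refine mul_le_mul_of_nonneg_right ?_ (div_nonneg h5.le hM.le)
        exact_mod_cast hcard
      have h3 : ((m : ℝ) + 1) * (e₀ / M) = e₀ / 2 := by
        rw [hMdef]
        field_simp
      have h4 : e₀ ≤ ∑ i ∈ Finset.univ.filter (fun i => ¬ i < i₀), ε (Rfun a i) := by
        refine Finset.single_le_sum (fun i _ => (hεpos _).le) ?_
        simp
      calc ∑ i ∈ Finset.univ.filter (fun i => ¬ i < i₀), ε (Rfun a' i)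
          ≤ ((Finset.univ.filter (fun i : Fin (m+1) => ¬ i < i₀)).card : ℝ) * (e₀ / M) := by
            rw [← nsmul_eq_mul]; exact h1
        _ ≤ ((m : ℝ) + 1) * (e₀ / M) := h2
        _ = e₀ / 2 := h3
        _ < e₀ := half_lt_self h5
        _ ≤ _ := h4
    exact add_lt_add_right hhigh _
  have hsum : ∀ c : Fin (m+1) → ℕ, ∑ i, t (u (Rfun c i))
      = (∑ _i : Fin (m+1), L) - ∑ i, ε (Rfun c i) := by
    intro c
    rw [← Finset.sum_sub_distrib]
    exact Finset.sum_congr rfl fun i _ => by rw [hts]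
  rw [hsum a, hsum a']
  exact sub_lt_sub_left main _

theorem omega0_pow_le_type_lexNat (m : ℕ) :
    Ordinal.omega0 ^ (m : Ordinal) ≤
      Ordinal.type ((· < ·) : Lex (Fin m → ℕ) → Lex (Fin m → ℕ) → Prop) := by
  induction m with
  | zero =>
    rw [Nat.cast_zero, Ordinal.opow_zero, Ordinal.one_le_iff_ne_zero,
      Ordinal.type_ne_zero_iff_nonempty]
    exact ⟨toLex (fun _ => 0)⟩
  | succ m ih =>
    have e1 : Ordinal.omega0 ^ ((m + 1 : ℕ) : Ordinal)
        = Ordinal.omega0 ^ (m : Ordinal) * Ordinal.omega0 := by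
      rw [Nat.cast_succ, Ordinal.opow_add, Ordinal.opow_one]
    have step : Ordinal.type (Prod.Lex ((· < ·) : ℕ → ℕ → Prop)
        ((· < ·) : Lex (Fin m → ℕ) → Lex (Fin m → ℕ) → Prop)) ≤
        Ordinal.type ((· < ·) : Lex (Fin (m + 1) → ℕ) → Lex (Fin (m + 1) → ℕ) → Prop) := by
      refine Ordinal.type_le_iff'.2 ⟨RelEmbedding.ofMonotone
        (fun p => toLex (Fin.cons p.1 (ofLex p.2))) ?_⟩
      rintro ⟨k, v⟩ ⟨k', v'⟩ hp
      rw [Prod.lex_def] at hp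
      rcases hp with h | ⟨heq, h⟩
      · refine nat_toLex_lt.2 (plex_of_head ?_)
        simpa using h
      · dsimp only at heq h
        subst heq
        exact nat_toLex_lt.2 (plex_cons _ (nat_toLex_lt.1 h))
    calc Ordinal.omega0 ^ ((m + 1 : ℕ) : Ordinal)
        = Ordinal.omega0 ^ (m : Ordinal) * Ordinal.omega0 := e1
      _ ≤ Ordinal.type ((· < ·) : Lex (Fin m → ℕ) → Lex (Fin m → ℕ) → Prop)
            * Ordinal.omega0 := mul_le_mul_left ih _
      _ = Ordinal.type (Prod.Lex ((· < ·) : ℕ → ℕ → Prop)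
            ((· < ·) : Lex (Fin m → ℕ) → Lex (Fin m → ℕ) → Prop)) := by
          rw [Ordinal.type_prod_lex, Ordinal.type_nat_lt]
      _ ≤ _ := step

/-- the `m`-fold sumset -/
def msum {d : ℕ} (m : ℕ) (X : Set (Fin d → ℝ)) : Set (Fin d → ℝ) :=
  {y | ∃ f : Fin m → Fin d → ℝ, (∀ i, f i ∈ X) ∧ y = ∑ i, f i}

theorem msum_one {d : ℕ} (X : Set (Fin d → ℝ)) : msum 1 X = X := by
  ext y
  constructor
  · rintro ⟨f, hf, rfl⟩
    simpa using hf 0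
  · intro hy
    exact ⟨fun _ => y, fun _ => hy, by simp⟩

/-- All iterated sumsets have type at most `ω ^ h`. -/
def Good (h : ℕ) {d : ℕ} (X : Set (Fin d → ℝ)) : Prop :=
  ∀ m : ℕ, obnd (toLex '' msum (m + 1) X) (Ordinal.omega0 ^ (h : Ordinal))

theorem good_bound : ∀ (d h : ℕ) (X : Set (Fin d → ℝ)), Good h X →
    obnd (toLex '' X) (Ordinal.omega0 ^ (d : Ordinal)) := by
  intro d
  induction d with
  | zero =>
    intro h X _
    have hss : (toLex '' X : Set (Lex (Fin 0 → ℝ))).Subsingleton := by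
      intro a _ b _
      exact congrArg toLex (funext fun i => i.elim0 : ofLex a = ofLex b)
    have hwf : (toLex '' X).IsWF := hss.finite.isWF
    refine ⟨hwf, ?_⟩
    rw [Nat.cast_zero, Ordinal.opow_zero]
    letI : WellFoundedLT ↥(toLex '' X) := ⟨hwf⟩
    haveI := hss.coe_sort
    rcases Set.eq_empty_or_nonempty (toLex '' X) with he | hne
    · haveI : IsEmpty ↥(toLex '' X) := by rw [he]; infer_instance
      show Ordinal.type ((· < ·) : ↥(toLex '' X) → ↥(toLex '' X) → Prop) ≤ 1
      rw [Ordinal.type_eq_zero_iff_isEmpty.2 ‹_›]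
      exact zero_le_one
    · have hu : Nonempty (Unique ↥(toLex '' X)) := by
        rw [unique_iff_subsingleton_and_nonempty]
        exact ⟨‹_›, hne.to_subtype⟩
      show Ordinal.type ((· < ·) : ↥(toLex '' X) → ↥(toLex '' X) → Prop) ≤ 1
      rw [Ordinal.type_eq_one_iff_unique.2 hu]
  | succ d ih =>
    intro h X hG
    have hX0 : obnd (toLex '' X) (Ordinal.omega0 ^ (h : Ordinal)) := by
      have := hG 0; rwa [msum_one] at this
    obtain ⟨hXwf, _⟩ := hX0
    set P : Set ℝ := (fun v : Fin (d+1) → ℝ => v 0) '' X with hPdef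
    have hrep : ∀ p ∈ P, ∃ x, x ∈ X ∧ x 0 = p := by
      rintro p ⟨x, hx, rfl⟩; exact ⟨x, hx, rfl⟩
    have hPwf : P.IsWF := by
      rw [Set.isWF_iff_no_descending_seq]
      intro f hf hmem
      choose xf hxfX hxf0 using fun n => hrep _ (hmem n)
      have : StrictAnti (fun n => toLex (xf n) : ℕ → Lex (Fin (d+1) → ℝ)) := by
        intro n m hnm
        refine real_toLex_lt.2 (plex_of_head ?_)
        rw [hxf0, hxf0]
        exact hf hnm
      exact (Set.isWF_iff_no_descending_seq.1 hXwf) _ this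
        (fun n => Set.mem_image_of_mem _ (hxfX n))
    have hfin : ∀ r : ℝ, (P ∩ Set.Iio r).Finite := by
      intro r
      by_contra hinf
      have hinf' : (P ∩ Set.Iio r).Infinite := hinf
      have hIwf : (P ∩ Set.Iio r).IsWF := hPwf.mono Set.inter_subset_left
      set f0 := Set.Infinite.natEmbedding _ hinf' with hf0
      obtain ⟨g, hg⟩ := hIwf.isPWO.exists_monotone_subseq (f := fun n => (f0 n : ℝ))
        (fun n => (f0 n).2)
      set t : ℕ → ℝ := fun n => (f0 (g n) : ℝ) with htdef
      have htm : StrictMono t := by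
        refine hg.strictMono_of_injective ?_
        exact Subtype.val_injective.comp (f0.injective.comp g.injective)
      have htb : ∀ k, t k ≤ r := fun k => le_of_lt (f0 (g k)).2.2
      have htP : ∀ k, t k ∈ P := fun k => (f0 (g k)).2.1
      obtain ⟨ν, hν⟩ := engine_main h t htm htb
      choose xf hxfX hxf0 using fun k => hrep _ (htP k)
      set Y : (Fin (h+1) → ℕ) → Fin (d+1) → ℝ := fun a => ∑ i, xf (ν a i) with hYdef
      have hYmem : ∀ a, Y a ∈ msum (h+1) X := fun a =>
        ⟨fun i => xf (ν a i), fun i => hxfX _, rfl⟩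
      have hYhead : ∀ a, Y a 0 = ∑ i, t (ν a i) := by
        intro a
        show (∑ i : Fin (h+1), xf (ν a i)) 0 = _
        rw [Finset.sum_apply]
        exact Finset.sum_congr rfl fun i _ => hxf0 _
      obtain ⟨hMwf, hMle⟩ := hG h
      letI : WellFoundedLT ↥(toLex '' msum (h+1) X) := ⟨hMwf⟩
      have hΨ : ∀ a b : Lex (Fin (h+1) → ℕ), a < b →
          (⟨toLex (Y (ofLex a)), Set.mem_image_of_mem _ (hYmem _)⟩ :
            ↥(toLex '' msum (h+1) X)) < ⟨toLex (Y (ofLex b)), Set.mem_image_of_mem _ (hYmem _)⟩ := by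
        intro a b hab
        rw [Subtype.mk_lt_mk]
        refine real_toLex_lt.2 (plex_of_head ?_)
        rw [hYhead, hYhead]
        exact hν _ _ (nat_toLex_lt.1 hab)
      have hle1 : Ordinal.omega0 ^ ((h + 1 : ℕ) : Ordinal) ≤
          Ordinal.type ((· < ·) : ↥(toLex '' msum (h+1) X) → ↥(toLex '' msum (h+1) X) → Prop) :=
        le_trans (omega0_pow_le_type_lexNat (h+1))
          (Ordinal.type_le_iff'.2 ⟨RelEmbedding.ofMonotone _ hΨ⟩)
      have hlt2 : Ordinal.omega0 ^ (h : Ordinal) < Ordinal.omega0 ^ ((h + 1 : ℕ) : Ordinal) := by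
        rw [Nat.cast_succ]
        exact (Ordinal.opow_lt_opow_iff_right Ordinal.one_lt_omega0).2 (lt_add_one _)
      exact absurd (le_trans hle1 hMle) (not_le.2 hlt2)
    set idx : ℝ → ℕ := fun r => (hfin r).toFinset.card with hidxdef
    have hidxlt : ∀ p ∈ P, ∀ q ∈ P, p < q → idx p < idx q := by
      intro p hp q hq hpq
      refine Finset.card_lt_card ?_
      rw [Set.Finite.toFinset_ssubset_toFinset]
      refine (Set.ssubset_iff_of_subset
        (Set.inter_subset_inter_right _ (Set.Iio_subset_Iio hpq.le))).2 ?_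
      exact ⟨p, ⟨hp, hpq⟩, fun hmem => lt_irrefl p hmem.2⟩
    -- fibers
    set Yf : ℝ → Set (Fin d → ℝ) := fun p => {v | Fin.cons p v ∈ X} with hYfdef
    have hcons_sum : ∀ (m : ℕ) (p : ℝ) (f : Fin (m+1) → Fin d → ℝ),
        (∑ i, Fin.cons p (f i) : Fin (d+1) → ℝ) = Fin.cons ((m+1 : ℕ) * p) (∑ i, f i) := by
      intro m p f
      funext j
      refine Fin.cases ?_ (fun k => ?_) j
      · rw [Finset.sum_apply]
        simp [Fin.cons_zero]
      · rw [Finset.sum_apply]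
        simp [Fin.cons_succ, Finset.sum_apply]
    have hGoodY : ∀ p : ℝ, Good h (Yf p) := by
      intro p m
      refine obnd_of_strictMono (hG m)
        (fun w => ⟨toLex (Fin.cons ((m+1 : ℕ) * p) (ofLex w.1)), ?_⟩) ?_
      · obtain ⟨f, hf, he⟩ := mem_toLex_image.1 w.2
        refine Set.mem_image_of_mem _ ?_
        refine ⟨fun i => Fin.cons p (f i), fun i => hf i, ?_⟩
        rw [hcons_sum, ← he]
      · intro a a' haa
        rw [Subtype.mk_lt_mk]
        exact real_toLex_lt.2 (plex_cons _ (real_toLex_lt.1 haa))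
    -- fiber embeddings into T
    haveI hTwo : IsWellOrder (Ordinal.omega0 ^ (d : Ordinal) : Ordinal.{0}).ToType (· < ·) :=
      isWellOrder_lt
    have hfib : ∀ p : ℝ, ∃ F : ↥(toLex '' Yf p) → (Ordinal.omega0 ^ (d : Ordinal) : Ordinal.{0}).ToType, ∀ a b, a < b → F a < F b := by
      intro p
      obtain ⟨hwf, hle⟩ := ih h (Yf p) (hGoodY p)
      letI : WellFoundedLT ↥(toLex '' Yf p) := ⟨hwf⟩
      have eT : Ordinal.type
            ((· < ·) : (Ordinal.omega0 ^ (d : Ordinal) : Ordinal.{0}).ToType →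
              (Ordinal.omega0 ^ (d : Ordinal) : Ordinal.{0}).ToType → Prop) = Ordinal.omega0 ^ (d : Ordinal) :=
        Ordinal.type_toType _
      have hle2 : Ordinal.type ((· < ·) : ↥(toLex '' Yf p) → ↥(toLex '' Yf p) → Prop) ≤
          Ordinal.type ((· < ·) : (Ordinal.omega0 ^ (d : Ordinal) : Ordinal.{0}).ToType →
            (Ordinal.omega0 ^ (d : Ordinal) : Ordinal.{0}).ToType → Prop) := by
        rw [eT]
        exact hle
      obtain ⟨F⟩ := Ordinal.type_le_iff'.1 hle2
      exact ⟨F, fun a b hab => F.map_rel_iff.2 hab⟩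
    choose Femb hFemb using hfib
    -- final embedding
    refine ⟨hXwf, ?_⟩
    letI : WellFoundedLT ↥(toLex '' X) := ⟨hXwf⟩
    have hmemY : ∀ w : ↥(toLex '' X),
        toLex (Fin.tail (ofLex w.1)) ∈ toLex '' Yf ((ofLex w.1) 0) := by
      intro w
      refine Set.mem_image_of_mem _ ?_
      show Fin.cons ((ofLex w.1) 0) (Fin.tail (ofLex w.1)) ∈ X
      rw [Fin.cons_self_tail]
      exact mem_toLex_image.1 w.2
    have hEmono : ∀ a b : ↥(toLex '' X), a < b →
        Prod.Lex ((· < ·) : ℕ → ℕ → Prop) ((· < ·) : (Ordinal.omega0 ^ (d : Ordinal) : Ordinal.{0}).ToType → (Ordinal.omega0 ^ (d : Ordinal) : Ordinal.{0}).ToType → Prop)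
          (idx ((ofLex a.1) 0), Femb _ ⟨_, hmemY a⟩)
          (idx ((ofLex b.1) 0), Femb _ ⟨_, hmemY b⟩) := by
      intro a b hab
      have hv : PLex (ofLex a.1) (ofLex b.1) := real_toLex_lt.1 hab
      have haP : (ofLex a.1) 0 ∈ P := ⟨ofLex a.1, mem_toLex_image.1 a.2, rfl⟩
      have hbP : (ofLex b.1) 0 ∈ P := ⟨ofLex b.1, mem_toLex_image.1 b.2, rfl⟩
      rcases plex_dest hv with h0 | ⟨h0, htl⟩
      · exact Prod.Lex.left _ _ (hidxlt _ haP _ hbP h0)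
      · rw [Prod.lex_def]
        refine Or.inr ⟨congrArg idx h0, ?_⟩
        have gen : ∀ (q : ℝ) (hq : (ofLex a.1) 0 = q)
            (mb : toLex (Fin.tail (ofLex b.1)) ∈ toLex '' Yf q),
            Femb ((ofLex a.1) 0) ⟨_, hmemY a⟩ < Femb q ⟨_, mb⟩ := by
          rintro q rfl mb
          refine hFemb _ _ _ ?_
          rw [Subtype.mk_lt_mk]
          exact real_toLex_lt.2 htl
        exact gen _ h0 (hmemY b)
    have htype : Ordinal.type ((· < ·) : ↥(toLex '' X) → ↥(toLex '' X) → Prop) ≤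
        Ordinal.type (Prod.Lex ((· < ·) : ℕ → ℕ → Prop) ((· < ·) : (Ordinal.omega0 ^ (d : Ordinal) : Ordinal.{0}).ToType → (Ordinal.omega0 ^ (d : Ordinal) : Ordinal.{0}).ToType → Prop)) :=
      Ordinal.type_le_iff'.2 ⟨RelEmbedding.ofMonotone _ hEmono⟩
    refine le_trans htype ?_
    rw [Ordinal.type_prod_lex, Ordinal.type_nat_lt,
      (Ordinal.type_toType _ : Ordinal.type ((· < ·) : (Ordinal.omega0 ^ (d : Ordinal) : Ordinal.{0}).ToType → (Ordinal.omega0 ^ (d : Ordinal) : Ordinal.{0}).ToType → Prop) = _),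
      Nat.cast_succ, Ordinal.opow_add, Ordinal.opow_one]

theorem msum_succ_subset {d : ℕ} {S : Set (Fin d → ℝ)}
    (hadd : ∀ x ∈ S, ∀ y ∈ S, x + y ∈ S) : ∀ m, msum (m + 1) S ⊆ S := by
  intro m
  induction m with
  | zero => rw [msum_one]
  | succ m ih =>
    rintro y ⟨f, hf, rfl⟩
    rw [Fin.sum_univ_succ]
    exact hadd _ (hf 0) _ (ih ⟨fun i => f i.succ, fun i => hf i.succ, rfl⟩)

end SemigroupOrd

/-- Let `S` be a subsemigroup (under addition) of the nonnegative part of `ℝ^n` with the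
lexicographic order, which is well ordered (for the lexicographic order) of ordinal type
`≤ ω ^ h`.  Then the ordinal type of `S` is at most `ω ^ n`. -/
theorem ordinalType_le_omega_pow_dim_of_wellOrdered_subsemigroup
    (n h : ℕ) (S : Set (Fin n → ℝ))
    (hadd : ∀ x ∈ S, ∀ y ∈ S, x + y ∈ S)
    (hnonneg : ∀ x ∈ S, toLex (0 : Fin n → ℝ) ≤ toLex x)
    (hWF : (toLex '' S : Set (Lex (Fin n → ℝ))).IsWF)
    (hord : setOrdinalType (toLex '' S : Set (Lex (Fin n → ℝ))) hWF ≤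
      Ordinal.omega0 ^ (h : Ordinal)) :
    setOrdinalType (toLex '' S : Set (Lex (Fin n → ℝ))) hWF ≤
      Ordinal.omega0 ^ (n : Ordinal) := by
  have hGood : SemigroupOrd.Good h S := by
    intro m
    exact SemigroupOrd.obnd_subset
      (Set.image_mono (SemigroupOrd.msum_succ_subset hadd m)) ⟨hWF, hord⟩
  obtain ⟨hwf2, hle2⟩ := SemigroupOrd.good_bound n h S hGood
  exact hle2
end

section
/- Let p and q be prime numbers, and let S_{p,q} be the subsemigroup of (ℚ, +) generated by the rational numbers 1 − 1/p^i for all integers i ≥ 1 together with 2 − 1/q^j for all integers j ≥ 1. Then S_{p,q} is a well-ordered subset of ℚ and, for every h ∈ ℕ, the ordinal type of S_{p,q} is strictly greater than ω^h; in particular the ordinal type of S_{p,q} is at least ω^ω. -/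
open Set Ordinal Pointwise

/-- Iterated lexicographic well-orders: `Wt h` carries `Wr h` of order type `ω^(h+1)`. -/
@[reducible] def Wt : ℕ → Type
  | 0 => ℕ
  | (h+1) => ℕ × Wt h

@[reducible] def Wr : (h : ℕ) → Wt h → Wt h → Prop
  | 0 => ((· < ·) : ℕ → ℕ → Prop)
  | (h+1) => Prod.Lex (· < ·) (Wr h)

instance Wwo : ∀ h, IsWellOrder (Wt h) (Wr h)
  | 0 => inferInstanceAs (IsWellOrder ℕ (· < ·))
  | (h+1) => letI := Wwo h
             inferInstanceAs (IsWellOrder (ℕ × Wt h) (Prod.Lex (· < ·) (Wr h)))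

theorem typeW : ∀ h : ℕ, Ordinal.type (Wr h) = Ordinal.omega0 ^ ((h : Ordinal) + 1)
  | 0 => by
      show Ordinal.type ((· < ·) : ℕ → ℕ → Prop) = _
      rw [Ordinal.type_nat_lt]
      simp
  | (h+1) => by
      show Ordinal.type (Prod.Lex ((· < ·) : ℕ → ℕ → Prop) (Wr h)) = _
      rw [Ordinal.type_prod_lex, typeW h, Ordinal.type_nat_lt, ← Ordinal.opow_succ,
        ← Ordinal.add_one_eq_succ]
      push_cast
      ring_nf

/-- Levels of the closure: `lev G n` consists of sums of `n+1` elements of `G`. -/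
def lev (G : Set ℚ) : ℕ → Set ℚ
  | 0 => G
  | (n+1) => lev G n + G

theorem lev_isPWO {G : Set ℚ} (hG : G.IsPWO) : ∀ n, (lev G n).IsPWO
  | 0 => hG
  | (n+1) => (lev_isPWO hG n).add hG

theorem lev_lb {G : Set ℚ} (hG : ∀ x ∈ G, (1:ℚ)/2 ≤ x) :
    ∀ n, ∀ x ∈ lev G n, ((n:ℚ)+1)/2 ≤ x
  | 0 => by simpa [lev] using hG
  | (n+1) => by
      rintro x hx
      rw [lev, Set.mem_add] at hx
      obtain ⟨a, ha, b, hb, rfl⟩ := hx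
      have h1 := lev_lb hG n a ha
      have h2 := hG b hb
      push_cast
      linarith

theorem lev_add {G : Set ℚ} : ∀ n m, lev G n + lev G m ⊆ lev G (n+m+1)
  | n, 0 => by exact fun x hx => hx
  | n, (m+1) => by
      show lev G n + (lev G m + G) ⊆ lev G (n+m+1) + G
      rw [← add_assoc]
      exact Set.add_subset_add_right (lev_add n m)

theorem mem_lev_of_mem_closure {G : Set ℚ} {x : ℚ}
    (hx : x ∈ AddSubsemigroup.closure G) : ∃ n, x ∈ lev G n := by
  induction hx using AddSubsemigroup.closure_induction with
  | mem y hy => exact ⟨0, hy⟩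
  | add y z hy hz ihy ihz =>
      obtain ⟨n, hn⟩ := ihy
      obtain ⟨m, hm⟩ := ihz
      exact ⟨n+m+1, lev_add n m (Set.add_mem_add hn hm)⟩

/-- The key embedding: for each `h` and shift `s` there is a strictly `Wr h`-monotone map
into the semigroup generated by the `1 - 1/p^i`, with controlled bounds. -/
theorem emb_exists {p : ℕ} (hp2 : (2:ℚ) ≤ (p:ℚ)) (S : AddSubsemigroup ℚ)
    (hgen : ∀ i : ℕ, 1 ≤ i → (1 - 1/(p:ℚ)^i) ∈ S) :
    ∀ h : ℕ, ∀ s : ℕ, ∃ f : Wt h → ℚ,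
      (∀ a b, Wr h a b → f a < f b) ∧ (∀ a, f a ∈ S) ∧
      (∀ a, ((h:ℚ) + 1) - 2/(p:ℚ)^(s+1) < f a ∧ f a < (h:ℚ) + 1) := by
  have hp1 : (1:ℚ) < (p:ℚ) := by linarith
  have hp0 : (0:ℚ) < (p:ℚ) := by linarith
  have hpow : ∀ k : ℕ, (0:ℚ) < (p:ℚ)^k := fun k => pow_pos hp0 k
  have hmono_pow : ∀ {a b : ℕ}, a ≤ b → (1:ℚ)/(p:ℚ)^b ≤ 1/(p:ℚ)^a := by
    intro a b hab
    exact one_div_le_one_div_of_le (hpow a) (pow_le_pow_right₀ hp1.le hab)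
  have hmono_pow2 : ∀ {a b : ℕ}, a ≤ b → (2:ℚ)/(p:ℚ)^b ≤ 2/(p:ℚ)^a := by
    intro a b hab
    exact div_le_div_of_nonneg_left (by norm_num) (hpow a) (pow_le_pow_right₀ hp1.le hab)
  have hstep : ∀ k : ℕ, (2:ℚ)/(p:ℚ)^(k+1) ≤ 1/(p:ℚ)^k := by
    intro k
    rw [div_le_div_iff₀ (hpow (k+1)) (hpow k)]
    have e : (p:ℚ)^(k+1) = (p:ℚ)^k * p := pow_succ _ _
    rw [e]
    nlinarith [hpow k]
  have hkey : ∀ k : ℕ, (1:ℚ)/(p:ℚ)^(k+1) + 2/(p:ℚ)^(k+2) ≤ 2/(p:ℚ)^(k+1) := by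
    intro k
    have h1 := hstep (k+1)
    have e : k+1+1 = k+2 := rfl
    rw [e] at h1
    have h2 : (2:ℚ)/(p:ℚ)^(k+1) = 2*(1/(p:ℚ)^(k+1)) := by ring
    linarith
  intro h
  induction h with
  | zero =>
      intro s
      refine ⟨fun n : Wt 0 => 1 - 1/(p:ℚ)^(s+n+1), ?_, ?_, ?_⟩
      · intro a b hab
        have hab' : (a : ℕ) < b := hab
        have hlt : (1:ℚ)/(p:ℚ)^(s+b+1) < 1/(p:ℚ)^(s+a+1) := by
          apply one_div_lt_one_div_of_lt (hpow (s+a+1))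
          exact pow_lt_pow_right₀ hp1 (Nat.add_lt_add_right (Nat.add_lt_add_left hab' s) 1)
        exact sub_lt_sub_left hlt 1
      · intro a
        exact hgen (s+a+1) (Nat.succ_le_succ (Nat.zero_le _))
      · intro a
        have e1 : (1:ℚ)/(p:ℚ)^(s+a+1) ≤ 1/(p:ℚ)^(s+1) :=
          hmono_pow (Nat.succ_le_succ (Nat.le_add_right s a))
        have e2 : (0:ℚ) < 1/(p:ℚ)^(s+1) := by positivity
        have e3 : (0:ℚ) < 1/(p:ℚ)^(s+a+1) := by positivity
        have h2 : (2:ℚ)/(p:ℚ)^(s+1) = 2*(1/(p:ℚ)^(s+1)) := by ring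
        push_cast
        constructor <;> linarith
  | succ h ih =>
      choose g hmono hmem hbd using ih
      intro s
      refine ⟨fun x : ℕ × Wt h => (1 - 1/(p:ℚ)^(s+x.1+1)) + g (s+x.1+1) x.2, ?_, ?_, ?_⟩
      · rintro ⟨n, w⟩ ⟨n', w'⟩ hab
        have hab' : Prod.Lex ((· < ·) : ℕ → ℕ → Prop) (Wr h) (n, w) (n', w') := hab
        show (1 - 1/(p:ℚ)^(s+n+1)) + g (s+n+1) w < (1 - 1/(p:ℚ)^(s+n'+1)) + g (s+n'+1) w'
        cases hab' with
        | left _ _ hlt =>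
            have u1 := (hbd (s+n+1) w).2
            have u2 := (hbd (s+n'+1) w').1
            have c1 : (1:ℚ)/(p:ℚ)^(s+n'+1) + 2/(p:ℚ)^(s+n'+2) ≤ 2/(p:ℚ)^(s+n'+1) :=
              hkey (s+n')
            have c2 : (2:ℚ)/(p:ℚ)^(s+n'+1) ≤ 1/(p:ℚ)^(s+n') := hstep (s+n')
            have c3 : (1:ℚ)/(p:ℚ)^(s+n') ≤ 1/(p:ℚ)^(s+n+1) := hmono_pow (by omega)
            linarith
        | right _ hlt =>
            have hg := hmono (s+n+1) w w' hlt
            linarith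
      · rintro ⟨n, w⟩
        exact S.add_mem (hgen (s+n+1) (by omega)) (hmem (s+n+1) w)
      · rintro ⟨n, w⟩
        have u1 := (hbd (s+n+1) w).1
        have u2 := (hbd (s+n+1) w).2
        have c1 : (1:ℚ)/(p:ℚ)^(s+n+1) + 2/(p:ℚ)^(s+n+2) ≤ 2/(p:ℚ)^(s+n+1) := hkey (s+n)
        have c2 : (2:ℚ)/(p:ℚ)^(s+n+1) ≤ 2/(p:ℚ)^(s+1) := hmono_pow2 (by omega)
        have e3 : (0:ℚ) < 1/(p:ℚ)^(s+n+1) := by positivity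
        constructor
        · show ((h+1:ℕ):ℚ) + 1 - 2/(p:ℚ)^(s+1) <
            (1 - 1/(p:ℚ)^(s+n+1)) + g (s+n+1) w
          push_cast
          linarith
        · show (1 - 1/(p:ℚ)^(s+n+1)) + g (s+n+1) w < ((h+1:ℕ):ℚ) + 1
          push_cast
          linarith

/-- Let `p`, `q` be prime numbers and let `S_{p,q}` be the subsemigroup of `(ℚ, +)` generated
by the rationals `1 - 1/p^i` (`i ≥ 1`) together with `2 - 1/q^j` (`j ≥ 1`).  Then `S_{p,q}` is
a well-ordered subset of `ℚ` whose ordinal type is strictly greater than `ω ^ h` for every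
`h ∈ ℕ`; in particular its ordinal type is at least `ω ^ ω`. -/
theorem ordinalType_of_Spq_gt_omega_pow (p q : ℕ) (hp : p.Prime) (hq : q.Prime)
    (S : AddSubsemigroup ℚ)
    (hS : S = AddSubsemigroup.closure
      ({x : ℚ | ∃ i : ℕ, 1 ≤ i ∧ x = 1 - 1 / (p : ℚ) ^ i} ∪
       {x : ℚ | ∃ j : ℕ, 1 ≤ j ∧ x = 2 - 1 / (q : ℚ) ^ j})) :
    ∃ hWF : (S : Set ℚ).IsWF,
      (∀ h : ℕ, Ordinal.omega0 ^ (h : Ordinal) < setOrdinalType (S : Set ℚ) hWF) ∧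
        Ordinal.omega0 ^ Ordinal.omega0 ≤ setOrdinalType (S : Set ℚ) hWF := by
  have hp2 : (2:ℚ) ≤ (p:ℚ) := by exact_mod_cast hp.two_le
  have hq2 : (2:ℚ) ≤ (q:ℚ) := by exact_mod_cast hq.two_le
  set G : Set ℚ := ({x : ℚ | ∃ i : ℕ, 1 ≤ i ∧ x = 1 - 1 / (p : ℚ) ^ i} ∪
       {x : ℚ | ∃ j : ℕ, 1 ≤ j ∧ x = 2 - 1 / (q : ℚ) ^ j}) with hG
  -- lower bound on generators
  have hGlb : ∀ x ∈ G, (1:ℚ)/2 ≤ x := by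
    rintro x (⟨i, hi, rfl⟩ | ⟨j, hj, rfl⟩)
    · have h1 : (2:ℚ) ≤ (p:ℚ)^i := by
        calc (2:ℚ) ≤ (p:ℚ) := hp2
        _ = (p:ℚ)^1 := (pow_one _).symm
        _ ≤ (p:ℚ)^i := pow_le_pow_right₀ (by linarith) hi
      have h2 : (1:ℚ)/(p:ℚ)^i ≤ 1/2 := one_div_le_one_div_of_le (by norm_num) h1
      linarith
    · have h1 : (2:ℚ) ≤ (q:ℚ)^j := by
        calc (2:ℚ) ≤ (q:ℚ) := hq2
        _ = (q:ℚ)^1 := (pow_one _).symm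
        _ ≤ (q:ℚ)^j := pow_le_pow_right₀ (by linarith) hj
      have h2 : (1:ℚ)/(q:ℚ)^j ≤ 1/2 := one_div_le_one_div_of_le (by norm_num) h1
      linarith
  -- G is partially well ordered
  have hGpwo : G.IsPWO := by
    have base : ∀ r : ℕ, (1:ℚ) < r → Set.IsPWO {x : ℚ | ∃ i : ℕ, 1 ≤ i ∧ x = 1 - 1/(r:ℚ)^i} := by
      intro r hr
      have himg : {x : ℚ | ∃ i : ℕ, 1 ≤ i ∧ x = 1 - 1/(r:ℚ)^i}
          = (fun i : ℕ => 1 - 1/(r:ℚ)^i) '' {i : ℕ | 1 ≤ i} := by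
        ext x
        simp only [Set.mem_setOf_eq, Set.mem_image]
        constructor
        · rintro ⟨i, hi, rfl⟩; exact ⟨i, hi, rfl⟩
        · rintro ⟨i, hi, rfl⟩; exact ⟨i, hi, rfl⟩
      rw [himg]
      have hwf : Set.IsWF {i : ℕ | 1 ≤ i} := wellFounded_lt.wellFoundedOn
      refine hwf.isPWO.image_of_monotone ?_
      intro a b hab
      have hle : (1:ℚ)/(r:ℚ)^b ≤ 1/(r:ℚ)^a :=
        one_div_le_one_div_of_le (pow_pos (by linarith) a) (pow_le_pow_right₀ hr.le hab)
      simpa using sub_le_sub_left hle 1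
    have b2 : Set.IsPWO {x : ℚ | ∃ j : ℕ, 1 ≤ j ∧ x = 2 - 1/(q:ℚ)^j} := by
      have himg : {x : ℚ | ∃ j : ℕ, 1 ≤ j ∧ x = 2 - 1/(q:ℚ)^j}
          = (fun y : ℚ => y + 1) '' {x : ℚ | ∃ j : ℕ, 1 ≤ j ∧ x = 1 - 1/(q:ℚ)^j} := by
        ext x
        simp only [Set.mem_setOf_eq, Set.mem_image]
        constructor
        · rintro ⟨j, hj, rfl⟩; exact ⟨1 - 1/(q:ℚ)^j, ⟨j, hj, rfl⟩, by ring⟩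
        · rintro ⟨y, ⟨j, hj, rfl⟩, rfl⟩; exact ⟨j, hj, by ring⟩
      rw [himg]
      exact (base q (by linarith)).image_of_monotone fun a b hab =>
        add_le_add_left hab 1
    exact (base p (by linarith)).union b2
  -- S is well founded
  have hWF : (S : Set ℚ).IsWF := by
    rw [Set.isWF_iff_no_descending_seq]
    intro f hf hmem
    set B : ℚ := f 0 with hB
    set N : ℕ := ⌈2*B⌉₊ + 1 with hN
    have hU : Set.IsWF ((Finset.range N).sup (lev G)) :=
      (Finset.isWF_sup _).2 fun i _ => (lev_isPWO hGpwo i).isWF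
    rw [Set.isWF_iff_no_descending_seq] at hU
    refine hU f hf ?_
    intro n
    have hmemn : f n ∈ AddSubsemigroup.closure G := by
      have := hmem n
      rwa [hS] at this
    obtain ⟨k, hk⟩ := mem_lev_of_mem_closure hmemn
    have hlb := lev_lb hGlb k _ hk
    have hfn : f n ≤ B := hf.antitone (Nat.zero_le n)
    have hkN : k ∈ Finset.range N := by
      rw [Finset.mem_range, hN, Nat.lt_succ_iff]
      have h2 : (2:ℚ)*B ≤ (⌈2*B⌉₊ : ℚ) := Nat.le_ceil _
      have h3 : (k:ℚ) ≤ (⌈2*B⌉₊ : ℚ) := by linarith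
      exact_mod_cast h3
    rw [Finset.sup_set_eq_biUnion]
    exact Set.mem_biUnion hkN hk
  -- the key ordinal estimate
  have hgen : ∀ i : ℕ, 1 ≤ i → (1 - 1/(p:ℚ)^i) ∈ S := by
    intro i hi
    rw [hS]
    exact AddSubsemigroup.subset_closure (Or.inl ⟨i, hi, rfl⟩)
  have key : ∀ h : ℕ, Ordinal.omega0 ^ ((h : Ordinal) + 1) ≤ setOrdinalType (S : Set ℚ) hWF := by
    intro h
    obtain ⟨f, hmono, hmem, _⟩ := emb_exists hp2 S hgen h 0
    rw [← typeW h]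
    unfold setOrdinalType
    letI : WellFoundedLT (S : Set ℚ) := ⟨hWF⟩
    refine Ordinal.type_le_iff'.2 ⟨RelEmbedding.ofMonotone
      (fun a => (⟨f a, hmem a⟩ : (S : Set ℚ))) ?_⟩
    intro a b hab
    exact Subtype.mk_lt_mk.2 (hmono a b hab)
  refine ⟨hWF, ?_, ?_⟩
  · intro h
    refine lt_of_lt_of_le ?_ (key h)
    exact (Ordinal.opow_lt_opow_iff_right Ordinal.one_lt_omega0).2
      (by rw [Ordinal.add_one_eq_succ]; exact Order.lt_succ _)
  · rw [Ordinal.opow_le_of_isSuccLimit Ordinal.omega0_ne_zero Ordinal.isSuccLimit_omega0]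
    intro b hb
    obtain ⟨n, rfl⟩ := Ordinal.lt_omega0.1 hb
    exact le_trans (Ordinal.opow_le_opow_right Ordinal.omega0_pos
      le_self_add) (key n)
end

section
/- Let p and q be distinct prime numbers, and for integers i ≥ 1 set γ_i = 1 − 1/p^i and δ_i = 2 − 1/q^i. Then the elements {γ_i : i ≥ 1} ∪ {δ_j : j ≥ 1} form a minimal system of generators of the subsemigroup S_{p,q} of (ℚ, +) which they generate: no γ_i lies in the subsemigroup generated by {γ_k : k ≠ i} ∪ {δ_j : j ≥ 1}, and no δ_j lies in the subsemigroup generated by {γ_i : i ≥ 1} ∪ {δ_k : k ≠ j}. -/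
lemma delta_not_p_denom {p q : ℕ} (hp : p.Prime) (hq : q.Prime) (hpq : p ≠ q)
    {j : ℕ} (hj : 1 ≤ j) (n : ℕ) (m : ℤ) :
    (2 - 1 / (q : ℚ) ^ j) * (p : ℚ) ^ n ≠ (m : ℚ) := by
  intro h
  have hq0 : (q : ℚ) ≠ 0 := Nat.cast_ne_zero.mpr hq.ne_zero
  have key : ((2 * q ^ j - 1 : ℤ) * p ^ n : ℚ) = (m * q ^ j : ℤ) := by
    push_cast
    field_simp at h
    linarith [h]
  have keyZ : (2 * (q:ℤ) ^ j - 1) * (p:ℤ) ^ n = m * (q:ℤ) ^ j := by exact_mod_cast key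
  have hqdvd : (q : ℤ) ∣ (2 * (q:ℤ) ^ j - 1) * (p:ℤ) ^ n := by
    rw [keyZ]
    exact (dvd_pow_self ((q:ℤ)) (Nat.one_le_iff_ne_zero.mp hj)).mul_left m
  have hqp : ¬ (q : ℤ) ∣ (p:ℤ) ^ n := by
    intro hd
    have := (Int.Prime.dvd_pow' hq hd)
    have hqdp : q ∣ p := by exact_mod_cast this
    exact hpq (((Nat.prime_dvd_prime_iff_eq hq hp).mp hqdp).symm)
  have h1 : (q : ℤ) ∣ 2 * (q:ℤ) ^ j - 1 :=
    ((Int.Prime.dvd_mul' hq hqdvd).resolve_right hqp)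
  have h2 : (q : ℤ) ∣ 2 * (q:ℤ) ^ j := (dvd_pow_self ((q:ℤ)) (Nat.one_le_iff_ne_zero.mp hj)).mul_left 2
  have h3 : (q : ℤ) ∣ 1 := by
    have := Dvd.dvd.sub h2 h1
    simpa using this
  have h4 := Int.le_of_dvd one_pos h3
  have h5 : 2 ≤ (q:ℤ) := by exact_mod_cast hq.two_le
  omega

lemma pow_inj_aux {p : ℕ} (hp : 2 ≤ p) {k i : ℕ}
    (h : 1 - 1 / (p : ℚ) ^ k = 1 - 1 / (p : ℚ) ^ i) : k = i := by
  have hp0 : (p : ℚ) ≠ 0 := by positivity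
  have : (p : ℚ) ^ k = (p : ℚ) ^ i := by
    field_simp at h
    linear_combination h
  have : ((p ^ k : ℕ) : ℚ) = ((p ^ i : ℕ) : ℚ) := by push_cast; exact this
  exact Nat.pow_right_injective hp (Nat.cast_injective this)

lemma gamma_lb {p : ℕ} (hp : 2 ≤ p) {k : ℕ} (hk : 1 ≤ k) :
    (1 / 2 : ℚ) ≤ 1 - 1 / (p : ℚ) ^ k := by
  have h2 : (2 : ℚ) ≤ (p : ℚ) ^ k := by
    calc (2 : ℚ) ≤ (p : ℚ) := by exact_mod_cast hp
    _ = (p : ℚ) ^ 1 := (pow_one _).symm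
    _ ≤ (p : ℚ) ^ k := by
        apply pow_le_pow_right₀ _ hk
        exact_mod_cast le_trans one_le_two (by exact_mod_cast hp)
  have h3 : 1 / (p : ℚ) ^ k ≤ 1 / 2 := by
    apply one_div_le_one_div_of_le
    · norm_num
    · exact h2
  linarith

/-- Let `p ≠ q` be prime numbers and, for `i ≥ 1`, set `γ_i = 1 - 1/p^i` and `δ_i = 2 - 1/q^i`.
These elements form a minimal system of generators of the subsemigroup of `(ℚ, +)` which they
generate: no `γ_i` lies in the subsemigroup generated by the other generators, and no `δ_j`
lies in the subsemigroup generated by the other generators. -/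
theorem minimal_generators_of_Spq (p q : ℕ) (hp : p.Prime) (hq : q.Prime) (hpq : p ≠ q) :
    (∀ i : ℕ, 1 ≤ i →
      (1 - 1 / (p : ℚ) ^ i) ∉ AddSubsemigroup.closure
        ({x : ℚ | ∃ k : ℕ, 1 ≤ k ∧ k ≠ i ∧ x = 1 - 1 / (p : ℚ) ^ k} ∪
         {x : ℚ | ∃ j : ℕ, 1 ≤ j ∧ x = 2 - 1 / (q : ℚ) ^ j})) ∧
    (∀ j : ℕ, 1 ≤ j →
      (2 - 1 / (q : ℚ) ^ j) ∉ AddSubsemigroup.closure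
        ({x : ℚ | ∃ i : ℕ, 1 ≤ i ∧ x = 1 - 1 / (p : ℚ) ^ i} ∪
         {x : ℚ | ∃ k : ℕ, 1 ≤ k ∧ k ≠ j ∧ x = 2 - 1 / (q : ℚ) ^ k})) := by
  have hp2 := hp.two_le
  have hq2 := hq.two_le
  constructor
  · intro i hi hmem
    -- invariant
    have key : ∀ x ∈ AddSubsemigroup.closure
        ({x : ℚ | ∃ k : ℕ, 1 ≤ k ∧ k ≠ i ∧ x = 1 - 1 / (p : ℚ) ^ k} ∪
         {x : ℚ | ∃ j : ℕ, 1 ≤ j ∧ x = 2 - 1 / (q : ℚ) ^ j}),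
        (1/2 : ℚ) ≤ x ∧ x ≠ 1 - 1 / (p : ℚ) ^ i := by
      intro x hx
      induction hx using AddSubsemigroup.closure_induction with
      | mem z hz =>
        rcases hz with ⟨k, hk1, hki, rfl⟩ | ⟨k, hk1, rfl⟩
        · exact ⟨gamma_lb hp2 hk1, fun h => hki (pow_inj_aux hp2 h)⟩
        · refine ⟨by linarith [gamma_lb hq2 hk1], fun h => ?_⟩
          have hgi : (1 : ℚ) - 1 / (p : ℚ) ^ i < 1 := by
            have : (0:ℚ) < 1 / (p : ℚ) ^ i := by positivity
            linarith
          have := gamma_lb hq2 hk1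
          linarith [h ▸ hgi]
      | add x y hx hy ihx ihy =>
        refine ⟨by linarith [ihx.1, ihy.1], fun h => ?_⟩
        have hgi : (1 : ℚ) - 1 / (p : ℚ) ^ i < 1 := by
          have : (0:ℚ) < 1 / (p : ℚ) ^ i := by positivity
          linarith
        have := ihx.1; have := ihy.1
        linarith [h ▸ hgi]
    exact (key _ hmem).2 rfl
  · intro j hj hmem
    have key : ∀ x ∈ AddSubsemigroup.closure
        ({x : ℚ | ∃ i : ℕ, 1 ≤ i ∧ x = 1 - 1 / (p : ℚ) ^ i} ∪
         {x : ℚ | ∃ k : ℕ, 1 ≤ k ∧ k ≠ j ∧ x = 2 - 1 / (q : ℚ) ^ k}),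
        (1/2 : ℚ) ≤ x ∧ ((2:ℚ) ≤ x ∨ (∃ n : ℕ, ∃ m : ℤ, x * (p:ℚ)^n = m) ∨
          ∃ k : ℕ, 1 ≤ k ∧ k ≠ j ∧ x = 2 - 1 / (q : ℚ) ^ k) := by
      intro x hx
      induction hx using AddSubsemigroup.closure_induction with
      | mem z hz =>
        rcases hz with ⟨k, hk1, rfl⟩ | ⟨k, hk1, hkj, rfl⟩
        · refine ⟨gamma_lb hp2 hk1, Or.inr (Or.inl ⟨k, (p:ℤ)^k - 1, ?_⟩)⟩
          have hp0 : ((p:ℚ))^k ≠ 0 := by positivity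
          push_cast
          field_simp
        · exact ⟨by linarith [gamma_lb hq2 hk1], Or.inr (Or.inr ⟨k, hk1, hkj, rfl⟩)⟩
      | add x y hx hy ihx ihy =>
        obtain ⟨hx1, hx2⟩ := ihx
        obtain ⟨hy1, hy2⟩ := ihy
        refine ⟨by linarith, ?_⟩
        have hdel : ∀ k : ℕ, 1 ≤ k → (3/2 : ℚ) ≤ 2 - 1 / (q : ℚ) ^ k := by
          intro k hk
          linarith [gamma_lb hq2 hk]
        rcases hx2 with h | ⟨n1, m1, hm1⟩ | ⟨k, hk1, _, rfl⟩
        · exact Or.inl (by linarith)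
        · rcases hy2 with h | ⟨n2, m2, hm2⟩ | ⟨k, hk1, _, rfl⟩
          · exact Or.inl (by linarith)
          · refine Or.inr (Or.inl ⟨n1 + n2, m1 * (p:ℤ)^n2 + m2 * (p:ℤ)^n1, ?_⟩)
            push_cast
            rw [pow_add]
            linear_combination (p:ℚ)^n2 * hm1 + (p:ℚ)^n1 * hm2
          · exact Or.inl (by linarith [hdel k hk1])
        · rcases hy2 with h | ⟨n2, m2, hm2⟩ | ⟨k', hk1', _, rfl⟩
          · exact Or.inl (by linarith)
          · exact Or.inl (by linarith [hdel k hk1])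
          · exact Or.inl (by linarith [hdel k hk1, hdel k' hk1'])
    obtain ⟨_, h⟩ := key _ hmem
    rcases h with h | ⟨n, m, hm⟩ | ⟨k, hk1, hkj, hk⟩
    · have : (0:ℚ) < 1 / (q : ℚ) ^ j := by positivity
      linarith
    · exact delta_not_p_denom hp hq hpq hj n m hm
    · apply hkj
      have h' : 1 - 1 / (q : ℚ) ^ k = 1 - 1 / (q : ℚ) ^ j := by linarith [hk]
      exact pow_inj_aux hq2 h'
end

section
/- Let K be a field and Γ a linearly ordered abelian group containing a positive element. Suppose R ⊆ K((t^Γ)) is a local ring essentially of finite type over K (a localization of a finitely generated K-subalgebra of K((t^Γ)) at a prime ideal) which is dominated by the t-adic valuation ν of K((t^Γ)), i.e. ν(f) ≥ 0 for all f ∈ R and ν(f) > 0 exactly when f lies in the maximal ideal of R. Then there exists z̲ ∈ K((t^Γ)) which is transcendental over the quotient field of R. -/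
open MvPolynomial Finset

/-- If `z : Fin (r+1) → M` is algebraically independent over `K`, then it is impossible that
every `z j` is a root of a nonzero polynomial whose coefficients all lie in the image of
`MvPolynomial.aeval x` for a fixed `x : Fin r → M`. (Growth/dimension-counting proof.) -/
theorem growth_contradiction {K M : Type} [Field K] [Field M] [Algebra K M]
    {r : ℕ} (x : Fin r → M) (z : Fin (r + 1) → M)
    (hz : AlgebraicIndependent K z)
    (hex : ∀ j, ∃ P : Polynomial M, P ≠ 0 ∧
      (∀ k, P.coeff k ∈ (MvPolynomial.aeval (R := K) x).range) ∧
      Polynomial.eval (z j) P = 0) : False := by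
  classical
  choose P hP0 hPc hPe using hex
  have hd1' : ∀ j, 1 ≤ (P j).natDegree := by
    intro j
    by_contra h
    have h0 : (P j).natDegree = 0 := by omega
    have heq := Polynomial.eq_C_of_natDegree_eq_zero h0
    have he := hPe j
    rw [heq, Polynomial.eval_C] at he
    exact hP0 j (by rw [heq, he, map_zero])
  set d : Fin (r + 1) → ℕ := fun j => (P j).natDegree with hd_def
  have hd1 : ∀ j, 1 ≤ d j := hd1' 
  choose p hp using fun j k => (AlgHom.mem_range _).1 (hPc j k)
  set t : ℕ := Finset.univ.sup
    (fun j : Fin (r+1) => (Finset.range (d j + 1)).sup fun k => (p j k).totalDegree) with ht_def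
  have ht : ∀ j k, k ≤ d j → (p j k).totalDegree ≤ t := by
    intro j k hk
    have h1 : (p j k).totalDegree ≤ (Finset.range (d j + 1)).sup fun k => (p j k).totalDegree :=
      Finset.le_sup (f := fun k => (p j k).totalDegree) (Finset.mem_range.2 (Nat.lt_succ_of_le hk))
    exact le_trans h1 (Finset.le_sup (f := fun j => (Finset.range (d j + 1)).sup
      fun k => (p j k).totalDegree) (Finset.mem_univ j))
  set σ : ℕ := ∑ j, (p j (d j)).totalDegree with hσ_def
  set c : ℕ := σ + t with hc_def
  set slift : MvPolynomial (Fin r) K := ∏ j, p j (d j) with hslift_def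
  set s : M := MvPolynomial.aeval x slift with hs_def
  have hs_eval : s = ∏ j, (P j).coeff (d j) := by
    rw [hs_def, hslift_def, map_prod]
    exact Finset.prod_congr rfl fun j _ => hp j (d j)
  have hcd0 : ∀ j, (P j).coeff (d j) ≠ 0 := fun j =>
    Polynomial.leadingCoeff_ne_zero.2 (hP0 j)
  have hs0 : s ≠ 0 := by
    rw [hs_eval]
    exact Finset.prod_ne_zero_iff.2 fun j _ => hcd0 j
  -- the filtration
  set Gen : ℕ → Set M := fun n => {m | ∃ (q : MvPolynomial (Fin r) K) (b : Fin (r+1) → ℕ),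
    q.totalDegree ≤ c * n ∧ (∀ j, b j < d j) ∧ m = MvPolynomial.aeval x q * ∏ j, z j ^ b j}
    with hGen_def
  set V : ℕ → Submodule K M := fun n => Submodule.span K (Gen n) with hV_def
  -- multiplication lemma
  have mulV : ∀ (q' : MvPolynomial (Fin r) K), q'.totalDegree ≤ c → ∀ n m, m ∈ V n →
      MvPolynomial.aeval x q' * m ∈ V (n + 1) := by
    intro q' hq' n m hm
    induction hm using Submodule.span_induction with
    | mem w hw =>
      obtain ⟨q, b, hq, hb, rfl⟩ := hw
      refine Submodule.subset_span ⟨q' * q, b, ?_, hb, by rw [map_mul, mul_assoc]⟩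
      calc (q' * q).totalDegree ≤ q'.totalDegree + q.totalDegree := totalDegree_mul _ _
        _ ≤ c + c * n := add_le_add hq' hq
        _ = c * (n + 1) := by ring
    | zero => rw [mul_zero]; exact Submodule.zero_mem _
    | add a b _ _ ha hb => rw [mul_add]; exact Submodule.add_mem _ ha hb
    | smul a m _ hm => rw [Algebra.mul_smul_comm]; exact Submodule.smul_mem _ _ hm
  -- key induction
  have keyC : ∀ n (a : Fin (r + 1) → ℕ), (∑ j, a j) ≤ n →
      s ^ n * ∏ j, z j ^ a j ∈ V n := by
    intro n
    induction n with
    | zero =>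
      intro a ha
      have haz : ∀ j, a j = 0 := by
        intro j
        have := Finset.single_le_sum (f := a) (fun i _ => Nat.zero_le _) (Finset.mem_univ j)
        omega
      have : (∏ j, z j ^ a j) = 1 := Finset.prod_eq_one fun j _ => by rw [haz j, pow_zero]
      rw [this, pow_zero, one_mul]
      refine Submodule.subset_span ⟨1, fun _ => 0, ?_, fun j => hd1 j, ?_⟩
      · simp [MvPolynomial.totalDegree_one]
      · simp
    | succ n ih =>
      intro a ha
      by_cases hcase : ∀ j, a j < d j
      · refine Submodule.subset_span ⟨slift ^ (n+1), a, ?_, hcase, ?_⟩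
        · refine le_trans (totalDegree_pow _ _) ?_
          have h1 : slift.totalDegree ≤ σ := by
            rw [hslift_def, hσ_def]; exact totalDegree_finset_prod _ _
          calc (n+1) * slift.totalDegree ≤ (n+1) * c :=
                Nat.mul_le_mul_left _ (le_trans h1 (by omega))
            _ = c * (n+1) := by ring
        · rw [map_pow]
      · push_neg at hcase
        obtain ⟨j₀, hj₀⟩ := hcase
        set A0 := a j₀ with hA0
        set D0 := d j₀ with hD0
        set a' : Fin (r+1) → ℕ := Function.update a j₀ (A0 - D0) with ha'
        set a'' : ℕ → (Fin (r+1) → ℕ) := fun k => Function.update a j₀ (A0 - D0 + k) with ha''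
        have hsum'' : ∀ k, k < D0 → (∑ j, a'' k j) ≤ n := by
          intro k hk
          have h1 : (∑ j, a'' k j) = (A0 - D0 + k) + ∑ j ∈ Finset.univ.erase j₀, a j := by
            rw [ha'']
            rw [← Finset.add_sum_erase _ _ (Finset.mem_univ j₀)]
            simp only [Function.update_self]
            congr 1
            exact Finset.sum_congr rfl fun j hj =>
              Function.update_of_ne (Finset.ne_of_mem_erase hj) _ _
          have h2 : (∑ j, a j) = A0 + ∑ j ∈ Finset.univ.erase j₀, a j := by
            rw [← Finset.add_sum_erase _ _ (Finset.mem_univ j₀)]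
          omega
        -- product identities
        have I1 : (∏ j, z j ^ a j) = z j₀ ^ D0 * ∏ j, z j ^ a' j := by
          rw [← Finset.mul_prod_erase _ _ (Finset.mem_univ j₀),
              ← Finset.mul_prod_erase _ (fun j => z j ^ a' j) (Finset.mem_univ j₀)]
          rw [ha']
          simp only [Function.update_self]
          rw [← mul_assoc, ← pow_add]
          have : D0 + (A0 - D0) = A0 := by omega
          rw [this]
          congr 1
          exact Finset.prod_congr rfl fun j hj => by
            rw [Function.update_of_ne (Finset.ne_of_mem_erase hj)]
        have I2 : ∀ k, z j₀ ^ k * ∏ j, z j ^ a' j = ∏ j, z j ^ a'' k j := by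
          intro k
          rw [← Finset.mul_prod_erase _ (fun j => z j ^ a' j) (Finset.mem_univ j₀),
              ← Finset.mul_prod_erase _ (fun j => z j ^ a'' k j) (Finset.mem_univ j₀)]
          rw [ha', ha'']
          simp only [Function.update_self]
          rw [← mul_assoc, ← pow_add]
          have : k + (A0 - D0) = A0 - D0 + k := by omega
          rw [this]
          congr 1
          exact Finset.prod_congr rfl fun j hj => by
            rw [Function.update_of_ne (Finset.ne_of_mem_erase hj),
                Function.update_of_ne (Finset.ne_of_mem_erase hj)]
        set cd : M := (P j₀).coeff D0 with hcd
        have I3 : cd * z j₀ ^ D0 = - ∑ k ∈ Finset.range D0, (P j₀).coeff k * z j₀ ^ k := by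
          have h0 := hPe j₀
          rw [Polynomial.eval_eq_sum_range] at h0
          rw [Finset.sum_range_succ] at h0
          rw [hcd, hD0]
          linear_combination h0
        set c' : M := ∏ j ∈ Finset.univ.erase j₀, MvPolynomial.aeval x (p j (d j)) with hc'
        have I4 : s = cd * c' := by
          rw [hs_eval, hcd, hc', hD0,
            ← Finset.mul_prod_erase _ (fun j => (P j).coeff (d j)) (Finset.mem_univ j₀)]
          congr 1
          exact Finset.prod_congr rfl fun j _ => (hp j (d j)).symm
        set q : ℕ → MvPolynomial (Fin r) K :=
          fun k => (∏ j ∈ Finset.univ.erase j₀, p j (d j)) * p j₀ k with hq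
        have hqdeg : ∀ k, k < D0 → (q k).totalDegree ≤ c := by
          intro k hk
          rw [hq]
          refine le_trans (totalDegree_mul _ _) ?_
          have h1 : (∏ j ∈ Finset.univ.erase j₀, p j (d j)).totalDegree ≤ σ := by
            refine le_trans (totalDegree_finset_prod _ _) ?_
            rw [hσ_def]
            exact Finset.sum_le_sum_of_subset (Finset.erase_subset _ _)
          have h2 : (p j₀ k).totalDegree ≤ t := ht j₀ k (by omega)
          omega
        have hqeval : ∀ k, MvPolynomial.aeval x (q k) = c' * (P j₀).coeff k := by
          intro k
          rw [hq, map_mul, map_prod, hp j₀ k, ← hc']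
        have hEq : s ^ (n+1) * ∏ j, z j ^ a j =
            ∑ k ∈ Finset.range D0,
              (-(MvPolynomial.aeval x (q k) * (s ^ n * ∏ j, z j ^ a'' k j))) := by
          have e1 : s ^ (n+1) * ∏ j, z j ^ a j
              = (cd * z j₀ ^ D0) * (c' * (s ^ n * ∏ j, z j ^ a' j)) := by
            rw [I1, pow_succ, I4]; ring
          rw [e1, I3, neg_mul, Finset.sum_mul, ← Finset.sum_neg_distrib]
          refine Finset.sum_congr rfl fun k hk => ?_
          rw [hqeval k, ← I2 k]
          ring
        rw [hEq]
        refine Submodule.sum_mem _ fun k hk => ?_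
        refine Submodule.neg_mem _ ?_
        exact mulV (q k) (hqdeg k (Finset.mem_range.1 hk)) n _
          (ih (a'' k) (hsum'' k (Finset.mem_range.1 hk)))
  -- finite spanning family
  set u : ∀ B : ℕ, ((Fin r → Fin (B+1)) × (∀ j, Fin (d j))) → M :=
    fun B eb => (∏ i, x i ^ (eb.1 i : ℕ)) * ∏ j, z j ^ (eb.2 j : ℕ) with hu
  have genle : ∀ n, V n ≤ Submodule.span K (Set.range (u (c * n))) := by
    intro n
    rw [hV_def]
    refine Submodule.span_le.2 ?_
    rintro m ⟨qq, b, hq, hb, rfl⟩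
    have hvi : ∀ v ∈ qq.support, ∀ i, v i ≤ c * n := by
      intro v hv i
      refine le_trans ?_ (le_trans (MvPolynomial.le_totalDegree hv) hq)
      by_cases hi : i ∈ v.support
      · exact Finset.single_le_sum (f := fun i => v i) (fun _ _ => Nat.zero_le _) hi
      · simp [Finsupp.notMem_support_iff.1 hi]
    have hexp : MvPolynomial.aeval x qq * ∏ j, z j ^ b j =
        ∑ v ∈ qq.support, MvPolynomial.coeff v qq •
          ((∏ i, x i ^ v i) * ∏ j, z j ^ b j) := by
      rw [MvPolynomial.aeval_def, MvPolynomial.eval₂_eq, Finset.sum_mul]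
      refine Finset.sum_congr rfl fun v hv => ?_
      rw [Algebra.smul_def, mul_assoc]
      congr 2
      refine (Finset.prod_subset (Finset.subset_univ _) fun i _ hi => ?_)
      rw [Finsupp.notMem_support_iff.1 hi, pow_zero]
    rw [hexp]
    refine Submodule.sum_mem _ fun v hv => Submodule.smul_mem _ _ (Submodule.subset_span ?_)
    exact ⟨(fun i => ⟨v i, Nat.lt_succ_of_le (hvi v hv i)⟩, fun j => ⟨b j, hb j⟩), rfl⟩
  -- counting
  set D : ℕ := ∏ j, d j with hD
  set E : ℕ := (c + 1) * (r + 1) with hE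
  set N : ℕ := E ^ r * D with hN
  set Mn : ℕ := (r + 1) * N with hMn
  set B : ℕ := c * Mn with hB
  -- the independent family
  set v : (Fin (r+1) → Fin (N+1)) → M := fun a => s ^ Mn * ∏ j, z j ^ (a j : ℕ) with hv
  have hvmem : ∀ a, v a ∈ Submodule.span K (Set.range (u B)) := by
    intro a
    refine genle Mn (keyC Mn (fun j => (a j : ℕ)) ?_)
    calc (∑ j, (a j : ℕ)) ≤ ∑ _j : Fin (r+1), N :=
          Finset.sum_le_sum fun j _ => Nat.lt_succ_iff.1 (a j).isLt
      _ = (r + 1) * N := by rw [Finset.sum_const, Finset.card_univ, Fintype.card_fin, smul_eq_mul]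
  have hvind : LinearIndependent K v := by
    rw [Fintype.linearIndependent_iff]
    intro g hg a
    have h1 : (∑ a, g a • (∏ j, z j ^ (a j : ℕ))) = 0 := by
      have h2 : s ^ Mn * (∑ a, g a • (∏ j, z j ^ (a j : ℕ))) = 0 := by
        rw [Finset.mul_sum]
        rw [← hg]
        exact Finset.sum_congr rfl fun a _ => (Algebra.mul_smul_comm _ _ _)
      rcases mul_eq_zero.1 h2 with h | h
      · exact absurd h (pow_ne_zero _ hs0)
      · exact h
    -- build the MvPolynomial
    set fa : (Fin (r+1) → Fin (N+1)) → (Fin (r+1) →₀ ℕ) :=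
      fun a => Finsupp.equivFunOnFinite.symm (fun j => (a j : ℕ)) with hfa
    have hfa_inj : Function.Injective fa := by
      intro a b hab
      funext j
      have := congrArg (fun f => f j) (congrArg Finsupp.equivFunOnFinite hab)
      simp only [hfa, Equiv.apply_symm_apply] at this
      exact Fin.ext this
    set p0 : MvPolynomial (Fin (r+1)) K := ∑ a, MvPolynomial.monomial (fa a) (g a) with hp0
    have hev : MvPolynomial.aeval z p0 = 0 := by
      rw [hp0, map_sum]
      rw [← h1]
      refine Finset.sum_congr rfl fun a _ => ?_
      rw [MvPolynomial.aeval_monomial, Algebra.smul_def]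
      congr 1
      rw [Finsupp.prod_fintype _ _ (fun j => pow_zero _)]
      refine Finset.prod_congr rfl fun j _ => ?_
      rw [hfa]
      simp [Finsupp.equivFunOnFinite]
    have hp00 : p0 = 0 := algebraicIndependent_iff.1 hz p0 hev
    have : MvPolynomial.coeff (fa a) p0 = g a := by
      rw [hp0, MvPolynomial.coeff_sum]
      rw [Finset.sum_eq_single a]
      · rw [MvPolynomial.coeff_monomial, if_pos rfl]
      · intro b _ hba
        rw [MvPolynomial.coeff_monomial, if_neg (fun h => hba (hfa_inj h))]
      · intro h
        exact absurd (Finset.mem_univ a) h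
    rw [hp00, MvPolynomial.coeff_zero] at this
    exact this.symm
  -- dimension bound
  have hfin : (Set.range (u B)).Finite := Set.finite_range _
  haveI : Module.Finite K ↥(Submodule.span K (Set.range (u B))) :=
    Module.Finite.span_of_finite K hfin
  have hcard : Fintype.card (Fin (r+1) → Fin (N+1)) ≤
      Fintype.card ((Fin r → Fin (B+1)) × (∀ j, Fin (d j))) := by
    have hvind' : LinearIndependent K
        (fun a : Fin (r+1) → Fin (N+1) =>
          (⟨v a, hvmem a⟩ : ↥(Submodule.span K (Set.range (u B))))) := by
      refine LinearIndependent.of_comp (Submodule.span K (Set.range (u B))).subtype ?_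
      convert hvind
      rfl
    refine le_trans (hvind'.fintype_card_le_finrank) ?_
    haveI : Fintype ↑(Set.range (u B)) := Set.fintypeRange _
    refine le_trans (finrank_span_le_card (R := K) (Set.range (u B))) ?_
    rw [Set.toFinset_range]
    exact le_trans Finset.card_image_le (by rw [Finset.card_univ])
  -- arithmetic contradiction
  have hD1 : 1 ≤ D := Finset.one_le_prod' fun j _ => hd1 j
  have hcard1 : Fintype.card (Fin (r+1) → Fin (N+1)) = (N+1)^(r+1) := by
    rw [Fintype.card_fun, Fintype.card_fin, Fintype.card_fin]
  have hcard2 : Fintype.card ((Fin r → Fin (B+1)) × (∀ j, Fin (d j))) = (B+1)^r * D := by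
    rw [Fintype.card_prod, Fintype.card_fun, Fintype.card_fin, Fintype.card_fin,
        Fintype.card_pi]
    congr 1
    exact Finset.prod_congr rfl fun j _ => Fintype.card_fin _
  rw [hcard1, hcard2] at hcard
  -- show (B+1)^r * D < (N+1)^(r+1)
  have hBE : B + 1 ≤ E * (N + 1) := by
    rw [hB, hMn, hE]
    nlinarith [Nat.zero_le c, Nat.zero_le r, Nat.zero_le N]
  have hstep : (B+1)^r * D ≤ E^r * (N+1)^r * D := by
    have : (B+1)^r ≤ (E * (N+1))^r := Nat.pow_le_pow_left hBE r
    rw [mul_pow] at this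
    exact Nat.mul_le_mul_right _ this
  have hlt : E^r * (N+1)^r * D < (N+1)^(r+1) := by
    have h1 : E^r * (N+1)^r * D = (E^r * D) * (N+1)^r := by ring
    rw [h1, pow_succ]
    have h2 : (N+1)^r * (N+1) = (N+1) * (N+1)^r := by ring
    rw [h2]
    refine Nat.mul_lt_mul_of_lt_of_le ?_ (le_refl _) ?_
    · omega
    · exact Nat.pos_of_ne_zero (pow_ne_zero _ (by omega))
  omega

open MvPolynomial Finset

/-! Prime-type countable subfield -/

def ratSubfield (K : Type) [Field K] : Subfield K where
  carrier := {x | ∃ m n : ℤ, (n : K) ≠ 0 ∧ x = (m : K) / (n : K)}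
  mul_mem' := by
    rintro a b ⟨m, n, hn, rfl⟩ ⟨m', n', hn', rfl⟩
    exact ⟨m * m', n * n', by push_cast; exact mul_ne_zero hn hn', by push_cast; field_simp⟩
  one_mem' := ⟨1, 1, by norm_num, by norm_num⟩
  add_mem' := by
    rintro a b ⟨m, n, hn, rfl⟩ ⟨m', n', hn', rfl⟩
    exact ⟨m * n' + m' * n, n * n', by push_cast; exact mul_ne_zero hn hn',
      by push_cast; field_simp⟩
  zero_mem' := ⟨0, 1, by norm_num, by norm_num⟩
  neg_mem' := by
    rintro a ⟨m, n, hn, rfl⟩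
    exact ⟨-m, n, hn, by push_cast; ring⟩
  inv_mem' := by
    rintro a ⟨m, n, hn, rfl⟩
    by_cases hm : (m : K) = 0
    · exact ⟨0, 1, by norm_num, by rw [hm]; simp⟩
    · exact ⟨n, m, hm, by rw [inv_div]⟩

theorem ratSubfield_countable (K : Type) [Field K] :
    ((ratSubfield K : Set K)).Countable := by
  have : (ratSubfield K : Set K) ⊆ Set.range (fun p : ℤ × ℤ => (p.1 : K) / (p.2 : K)) := by
    rintro x ⟨m, n, _, rfl⟩
    exact ⟨(m, n), rfl⟩
  exact Set.Countable.mono this (Set.countable_range _)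

/-! Series with coefficients in a subfield -/

def coeffIn (Γ : Type) [AddCommGroup Γ] [LinearOrder Γ] [IsOrderedAddMonoid Γ] {K : Type} [Field K] (F : Subfield K) :
    Subring (HahnSeries Γ K) where
  carrier := {f | ∀ γ, f.coeff γ ∈ F}
  mul_mem' := by
    intro a b ha hb
    intro γ
    rw [HahnSeries.coeff_mul]
    exact Subfield.sum_mem _ fun ij _ => Subfield.mul_mem _ (ha _) (hb _)
  one_mem' := by
    intro γ
    rw [HahnSeries.coeff_one]
    split <;> [exact Subfield.one_mem _; exact Subfield.zero_mem _]
  add_mem' := by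
    intro a b ha hb γ
    rw [HahnSeries.coeff_add]
    exact Subfield.add_mem _ (ha γ) (hb γ)
  zero_mem' := by
    intro γ
    rw [HahnSeries.coeff_zero]
    exact Subfield.zero_mem _
  neg_mem' := by
    intro a ha γ
    rw [HahnSeries.coeff_neg]
    exact Subfield.neg_mem _ (ha γ)

/-! Binary candidate series -/

section cand
variable {K Γ : Type} [Field K] [AddCommGroup Γ] [LinearOrder Γ] [IsOrderedAddMonoid Γ] {g : Γ} (hg : 0 < g)

noncomputable def natEmb (hg : 0 < g) : ℕ ↪o Γ :=
  OrderEmbedding.ofStrictMono (fun n => (n + 1) • g)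
    (fun n m hnm => nsmul_lt_nsmul_left hg (by omega))

noncomputable def binSeries (f : ℕ → Bool) : HahnSeries ℕ K :=
  ⟨fun n => if f n then 1 else 0, ((Set.isWF_univ_iff.2 inferInstance).mono
    (Set.subset_univ _)).isPWO⟩

noncomputable def cand (hg : 0 < g) (f : ℕ → Bool) : HahnSeries Γ K :=
  HahnSeries.embDomain (natEmb hg) (binSeries f)

theorem binSeries_coeff (f : ℕ → Bool) (n : ℕ) :
    (binSeries (K := K) f).coeff n = if f n then 1 else 0 := rfl

theorem cand_injective : Function.Injective (cand (K := K) hg) := by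
  intro f f' hff
  funext n
  have h1 : (cand (K := K) hg f).coeff ((natEmb hg) n)
      = (cand (K := K) hg f').coeff ((natEmb hg) n) := by rw [hff]
  rw [cand, cand, HahnSeries.embDomain_coeff, HahnSeries.embDomain_coeff,
    binSeries_coeff, binSeries_coeff] at h1
  by_cases hfn : f n <;> by_cases hfn' : f' n
  · rw [hfn, hfn']
  · rw [if_pos hfn, if_neg hfn'] at h1
    exact absurd h1 one_ne_zero
  · rw [if_neg hfn, if_pos hfn'] at h1
    exact absurd h1.symm one_ne_zero
  · rw [Bool.eq_false_iff.2 hfn, Bool.eq_false_iff.2 hfn']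

theorem cand_coeff_mem (F : Subfield K) (f : ℕ → Bool) (γ : Γ) :
    (cand hg f).coeff γ ∈ F := by
  by_cases hγ : γ ∈ Set.range (natEmb hg)
  · obtain ⟨n, rfl⟩ := hγ
    rw [cand, HahnSeries.embDomain_coeff, binSeries_coeff]
    split <;> [exact Subfield.one_mem _; exact Subfield.zero_mem _]
  · rw [cand, HahnSeries.embDomain_notin_range hγ]
    exact Subfield.zero_mem _

theorem cand_uncountable {S : Set (HahnSeries Γ K)} (hS : S.Countable)
    : ∃ f : ℕ → Bool, cand hg f ∉ S := by
  by_contra h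
  push_neg at h
  have h1 : (Set.univ : Set (ℕ → Bool)).Countable := by
    have h2 : (Set.univ : Set (ℕ → Bool)) ⊆ (cand hg) ⁻¹' S := fun f _ => h f
    exact Set.Countable.mono h2 (hS.preimage (cand_injective hg))
  haveI : Countable (ℕ → Bool) := Set.countable_univ_iff.1 h1
  obtain ⟨fsur, hfsur⟩ := exists_surjective_nat (ℕ → Bool)
  have hσ : Function.Surjective (fun n => {k | fsur n k = true} : ℕ → Set ℕ) := by
    intro s
    classical
    obtain ⟨n, hn⟩ := hfsur (fun k => if k ∈ s then true else false)
    refine ⟨n, ?_⟩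
    ext k
    simp only [Set.mem_setOf_eq, hn]
    by_cases hk : k ∈ s <;> simp [hk]
  exact Function.cantor_surjective _ hσ

end cand

/-! Descent of linear relations to a subfield -/

theorem hahn_coeff_sum {K Γ : Type} [Field K] [AddCommGroup Γ] [LinearOrder Γ] [IsOrderedAddMonoid Γ]
    {ι : Type} (S : Finset ι) (f : ι → HahnSeries Γ K) (γ : Γ) :
    (∑ i ∈ S, f i).coeff γ = ∑ i ∈ S, (f i).coeff γ := by
  classical
  induction S using Finset.induction with
  | empty => simp [HahnSeries.coeff_zero]
  | @insert a T hnotmem ih =>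
    rw [Finset.sum_insert hnotmem, Finset.sum_insert hnotmem, HahnSeries.coeff_add, ih]

theorem descend {K Γ : Type} [Field K] [AddCommGroup Γ] [LinearOrder Γ] [IsOrderedAddMonoid Γ] (F : Subfield K)
    {ι : Type} (w : ι → HahnSeries Γ K) (hw : ∀ i γ, (w i).coeff γ ∈ F)
    (S : Finset ι) (lam : ι → K) {i₀ : ι} (hi₀ : i₀ ∈ S) (hlam : lam i₀ ≠ 0)
    (hrel : ∑ i ∈ S, lam i • w i = 0) :
    ∃ mu : ι → K, (∀ i, mu i ∈ F) ∧ mu i₀ ≠ 0 ∧ ∑ i ∈ S, mu i • w i = 0 := by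
  classical
  set b := Module.Basis.ofVectorSpace F K with hb
  have hγ : ∀ γ : Γ, ∑ i ∈ S, (⟨(w i).coeff γ, hw i γ⟩ : F) • lam i = 0 := by
    intro γ
    have h1 := congrArg (fun x : HahnSeries Γ K => x.coeff γ) hrel
    simp only [HahnSeries.coeff_zero] at h1
    rw [hahn_coeff_sum] at h1
    rw [← h1]
    refine Finset.sum_congr rfl fun i _ => ?_
    show (⟨(w i).coeff γ, hw i γ⟩ : F) • lam i = (lam i • w i).coeff γ
    rw [HahnSeries.coeff_smul, Submonoid.smul_def, smul_eq_mul]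
    exact mul_comm _ _
  have hrep : ∀ (γ : Γ) (j), ∑ i ∈ S, (⟨(w i).coeff γ, hw i γ⟩ : F) * (b.repr (lam i) j) = 0 := by
    intro γ j
    have h2 := congrArg b.repr (hγ γ)
    rw [map_sum, map_zero] at h2
    have h3 := congrArg (fun v => v j) h2
    simp only [Finsupp.coe_finset_sum, Finset.sum_apply, Finsupp.coe_zero, Pi.zero_apply,
      map_smul, Finsupp.smul_apply, smul_eq_mul] at h3
    exact h3
  have hne : b.repr (lam i₀) ≠ 0 := by
    intro h
    exact hlam (by simpa using (LinearEquiv.map_eq_zero_iff b.repr).1 h)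
  obtain ⟨j, hj⟩ := Finsupp.ne_iff.1 hne
  rw [Finsupp.coe_zero, Pi.zero_apply] at hj
  refine ⟨fun i => (b.repr (lam i) j : K), fun i => (b.repr (lam i) j).2, ?_, ?_⟩
  · intro h
    simp only at h
    exact hj (by exact_mod_cast h)
  · apply HahnSeries.coeff_injective
    funext γ
    have h4 := hrep γ j
    have h5 : ((∑ i ∈ S, (⟨(w i).coeff γ, hw i γ⟩ : F) * (b.repr (lam i) j) : F) : K) = 0 := by
      rw [h4]; rfl
    rw [AddSubmonoidClass.coe_finset_sum] at h5
    simp only [MulMemClass.coe_mul] at h5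
    show (∑ i ∈ S, (b.repr (lam i) j : K) • w i).coeff γ = (0 : HahnSeries Γ K).coeff γ
    rw [hahn_coeff_sum, HahnSeries.coeff_zero, ← h5]
    refine Finset.sum_congr rfl fun i _ => ?_
    rw [HahnSeries.coeff_smul, smul_eq_mul]
    exact mul_comm _ _

/-! Algebraic independence from the coefficient-field property -/

theorem aeval_expand {K M : Type} [CommSemiring K] [CommRing M] [Algebra K M] {m : ℕ}
    (z : Fin m → M) (p : MvPolynomial (Fin m) K) :
    MvPolynomial.aeval z p = ∑ a ∈ p.support, MvPolynomial.coeff a p • ∏ j, z j ^ a j := by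
  rw [MvPolynomial.aeval_def, MvPolynomial.eval₂_eq]
  refine Finset.sum_congr rfl fun a _ => ?_
  rw [Algebra.smul_def]
  congr 1
  exact Finset.prod_subset (Finset.subset_univ _) fun i _ hi => by
    rw [Finsupp.notMem_support_iff.1 hi, pow_zero]

theorem indep_of_coeffs {K Γ : Type} [Field K] [AddCommGroup Γ] [LinearOrder Γ] [IsOrderedAddMonoid Γ] (F : Subfield K)
    {m : ℕ} (z : Fin m → HahnSeries Γ K) (hzF : ∀ j, z j ∈ coeffIn Γ F)
    (hQ : ∀ q : MvPolynomial (Fin m) K, (∀ a, MvPolynomial.coeff a q ∈ F) →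
      MvPolynomial.aeval z q = 0 → q = 0) :
    AlgebraicIndependent K z := by
  classical
  rw [algebraicIndependent_iff]
  intro p hp
  by_contra hp0
  set w : (Fin m →₀ ℕ) → HahnSeries Γ K := fun a => ∏ j, z j ^ a j with hwdef
  have hwF : ∀ a γ, (w a).coeff γ ∈ F := by
    intro a γ
    have : w a ∈ coeffIn Γ F :=
      Subring.prod_mem _ fun j _ => Subring.pow_mem _ (hzF j) _
    exact this γ
  have ha₀ : p.support.Nonempty := by
    rw [Finset.nonempty_iff_ne_empty, Ne, MvPolynomial.support_eq_empty]
    exact hp0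
  obtain ⟨a₀, ha₀mem⟩ := ha₀
  have hca₀ : MvPolynomial.coeff a₀ p ≠ 0 := MvPolynomial.mem_support_iff.1 ha₀mem
  have hrel : ∑ a ∈ p.support, MvPolynomial.coeff a p • w a = 0 := by
    rw [← aeval_expand z p, hp]
  obtain ⟨mu, hmuF, hmu0, hmurel⟩ := descend F w hwF p.support
    (fun a => MvPolynomial.coeff a p) ha₀mem hca₀ hrel
  set q : MvPolynomial (Fin m) K :=
    ∑ a ∈ p.support, MvPolynomial.monomial a (mu a) with hqdef
  have hqcoeff : ∀ b, MvPolynomial.coeff b q = if b ∈ p.support then mu b else 0 := by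
    intro b
    rw [hqdef, MvPolynomial.coeff_sum]
    rw [Finset.sum_congr rfl (fun a _ => MvPolynomial.coeff_monomial b a (mu a))]
    exact Finset.sum_ite_eq' p.support b mu
  have hqF : ∀ b, MvPolynomial.coeff b q ∈ F := by
    intro b
    rw [hqcoeff]
    split
    · exact hmuF b
    · exact Subfield.zero_mem F
  have hqeval : MvPolynomial.aeval z q = 0 := by
    rw [hqdef, map_sum, ← hmurel]
    refine Finset.sum_congr rfl fun a _ => ?_
    rw [MvPolynomial.aeval_monomial, Algebra.smul_def]
    congr 1
    rw [Finsupp.prod_fintype _ _ (fun j => pow_zero _)]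
  have hq0 : q ≠ 0 := by
    intro h
    have := hqcoeff a₀
    rw [h, MvPolynomial.coeff_zero, if_pos ha₀mem] at this
    exact hmu0 this.symm
  exact hq0 (hQ q hqF hqeval)

/-! Construction of an algebraically independent tuple of binary series -/

theorem exists_good (K Γ : Type) [Field K] [AddCommGroup Γ] [LinearOrder Γ] [IsOrderedAddMonoid Γ]
    {g : Γ} (hg : 0 < g) (m : ℕ) :
    ∃ z : Fin m → HahnSeries Γ K, (∀ j, z j ∈ coeffIn Γ (ratSubfield K)) ∧
      (∀ q : MvPolynomial (Fin m) K, (∀ a, MvPolynomial.coeff a q ∈ ratSubfield K) →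
        MvPolynomial.aeval z q = 0 → q = 0) := by
  classical
  set F := ratSubfield K with hF
  induction m with
  | zero =>
    refine ⟨fun i => i.elim0, fun j => j.elim0, fun q _ hq => ?_⟩
    have h1 := MvPolynomial.eq_C_of_isEmpty q
    rw [h1, MvPolynomial.aeval_C] at hq
    have h2 : MvPolynomial.coeff 0 q = 0 :=
      (algebraMap K (HahnSeries Γ K)).injective (by rw [map_zero]; exact hq)
    rw [h1, h2, map_zero]
  | succ n ih =>
    obtain ⟨z, hzF, hzQ⟩ := ih
    -- the specialization algebra map
    set τ : MvPolynomial (Fin (n+1)) K →ₐ[K] Polynomial (HahnSeries Γ K) :=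
      MvPolynomial.aeval
        (Fin.cons Polynomial.X (fun i => Polynomial.C (z i))) with hτ
    -- τ agrees with mapping finSuccEquiv
    have hτeq : ∀ q, τ q = Polynomial.map (MvPolynomial.aeval z).toRingHom
        (MvPolynomial.finSuccEquiv K n q) := by
      intro q
      have h1 : (Polynomial.mapAlgHom (MvPolynomial.aeval z)).comp
          ((MvPolynomial.finSuccEquiv K n) : MvPolynomial (Fin (n+1)) K →ₐ[K] _) = τ := by
        apply MvPolynomial.algHom_ext
        intro i
        refine Fin.cases ?_ (fun i' => ?_) i
        · simp [hτ, MvPolynomial.finSuccEquiv_X_zero, Polynomial.mapAlgHom]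
        · simp [hτ, MvPolynomial.finSuccEquiv_X_succ, Polynomial.mapAlgHom]
      rw [← h1]
      rfl
    -- τ is nonzero on nonzero F-coefficient polynomials
    have hτ0 : ∀ q : MvPolynomial (Fin (n+1)) K,
        (∀ a, MvPolynomial.coeff a q ∈ F) → q ≠ 0 → τ q ≠ 0 := by
      intro q hqF hq0
      have h1 : MvPolynomial.finSuccEquiv K n q ≠ 0 := by
        intro h
        exact hq0 (by simpa using congrArg (MvPolynomial.finSuccEquiv K n).symm h)
      obtain ⟨k, hk⟩ : ∃ k, (MvPolynomial.finSuccEquiv K n q).coeff k ≠ 0 := by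
        by_contra h
        push_neg at h
        exact h1 (Polynomial.ext h)
      have h2 : MvPolynomial.aeval z ((MvPolynomial.finSuccEquiv K n q).coeff k) ≠ 0 := by
        intro h
        refine hk (hzQ _ ?_ h)
        intro a
        rw [MvPolynomial.finSuccEquiv_coeff_coeff]
        exact hqF _
      intro h
      rw [hτeq q] at h
      have h3 := congrArg (fun P => Polynomial.coeff P k) h
      simp only [Polynomial.coeff_map, Polynomial.coeff_zero] at h3
      exact h2 h3
    -- countability of the bad set
    set Q : Set (MvPolynomial (Fin (n+1)) K) :=
      {q | (∀ a, MvPolynomial.coeff a q ∈ F) ∧ q ≠ 0} with hQdef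
    have hQc : Q.Countable := by
      have hsub : Q ⊆ Set.range (MvPolynomial.map (F.subtype : F →+* K)) := by
        intro q hq
        refine ⟨∑ a ∈ q.support, MvPolynomial.monomial a (⟨MvPolynomial.coeff a q, hq.1 a⟩ : F),
          ?_⟩
        apply MvPolynomial.ext
        intro b
        rw [MvPolynomial.coeff_map]
        have hcoeff : MvPolynomial.coeff b
            (∑ a ∈ q.support, MvPolynomial.monomial a (⟨MvPolynomial.coeff a q, hq.1 a⟩ : F)) =
            if b ∈ q.support then (⟨MvPolynomial.coeff b q, hq.1 b⟩ : F) else 0 := by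
          rw [MvPolynomial.coeff_sum,
            Finset.sum_congr rfl (fun a _ => MvPolynomial.coeff_monomial b a _),
            Finset.sum_ite_eq' q.support b _]
        rw [hcoeff]
        by_cases hb : b ∈ q.support
        · rw [if_pos hb]; rfl
        · rw [if_neg hb, map_zero]
          exact (MvPolynomial.notMem_support_iff.1 hb).symm
      haveI : Countable F := (ratSubfield_countable K).to_subtype
      haveI : Countable (MvPolynomial (Fin (n+1)) F) :=
        AddMonoidAlgebra.coeff_injective.countable
      exact Set.Countable.mono hsub (Set.countable_range _)
    set Bad : Set (HahnSeries Γ K) :=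
      ⋃ q ∈ Q, {w | Polynomial.IsRoot (τ q) w} with hBad
    have hBadc : Bad.Countable := by
      refine Set.Countable.biUnion hQc fun q hq => ?_
      exact (Polynomial.finite_setOf_isRoot (hτ0 q hq.1 hq.2)).countable
    obtain ⟨f, hf⟩ := cand_uncountable (K := K) hg hBadc
    set w : HahnSeries Γ K := cand hg f with hwdef
    refine ⟨Fin.cons w z, ?_, ?_⟩
    · intro j
      refine Fin.cases ?_ (fun i => ?_) j
      · rw [Fin.cons_zero]
        exact fun γ => cand_coeff_mem hg F f γ
      · rw [Fin.cons_succ]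
        exact hzF i
    · intro q hqF hqev
      by_contra hq0
      -- w is a root of τ q
      have heval : MvPolynomial.aeval (Fin.cons w z) q = Polynomial.eval w (τ q) := by
        have h1 : ((Polynomial.aeval w).restrictScalars K).comp τ =
            MvPolynomial.aeval (Fin.cons w z) := by
          apply MvPolynomial.algHom_ext
          intro i
          refine Fin.cases ?_ (fun i' => ?_) i
          · simp [hτ]
          · simp [hτ]
        rw [← h1, AlgHom.comp_apply, AlgHom.coe_restrictScalars', ← Polynomial.coe_aeval_eq_eval]
      have hroot : w ∈ Bad := by
        rw [hBad]
        refine Set.mem_biUnion (show q ∈ Q from ⟨hqF, hq0⟩) ?_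
        show Polynomial.IsRoot (τ q) w
        rw [Polynomial.IsRoot, ← heval]  -- IsRoot: eval w (τ q) = 0
        exact hqev
      exact hf hroot



/-- Let `K` be a field and `Γ` a linearly ordered abelian group containing a positive
element.  Suppose `R ⊆ K((t^Γ))` is a local ring essentially of finite type over `K` — the
localization `A_P` of a finitely generated `K`-subalgebra `A` of `K((t^Γ))` at a prime ideal
`P` — which is dominated by the `t`-adic valuation `ν` of `K((t^Γ))` (`ν ≥ 0` on `R`, with
`ν > 0` exactly on the maximal ideal `P·A_P`).  Then there exists `z̄ ∈ K((t^Γ))` which is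
transcendental over the quotient field of `R`. -/
theorem exists_transcendental_over_essentially_finite_type
    (K Γ : Type) [Field K] [AddCommGroup Γ] [LinearOrder Γ] [IsOrderedAddMonoid Γ]
    (hΓ : ∃ g : Γ, 0 < g)
    (A : Subalgebra K (HahnSeries Γ K)) (hA : A.FG)
    (P : Ideal A) (hP : P.IsPrime)
    (R : Set (HahnSeries Γ K))
    (hR : R = {f | ∃ a b : A, b ∉ P ∧ f = (a : HahnSeries Γ K) / (b : HahnSeries Γ K)})
    (hdom₁ : ∀ f ∈ R, 0 ≤ f.orderTop)
    (hdom₂ : ∀ f ∈ R, (0 < f.orderTop ↔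
      ∃ a b : A, a ∈ P ∧ b ∉ P ∧ f = (a : HahnSeries Γ K) / (b : HahnSeries Γ K))) :
    ∃ zbar : HahnSeries Γ K, ∀ G : Polynomial (HahnSeries Γ K), G ≠ 0 →
      (∀ k, G.coeff k ∈ {q : HahnSeries Γ K | ∃ u ∈ R, ∃ v ∈ R, v ≠ 0 ∧ q = u / v}) →
      Polynomial.eval zbar G ≠ 0 := by
  classical
  obtain ⟨g, hg⟩ := hΓ
  obtain ⟨T, hT⟩ := hA
  set r := T.card with hr
  set x : Fin r → HahnSeries Γ K := fun i => ↑(T.equivFin.symm i) with hxdef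
  have hx : Set.range x = (T : Set (HahnSeries Γ K)) := by
    ext w
    constructor
    · rintro ⟨i, rfl⟩
      exact (T.equivFin.symm i).2
    · intro hw
      refine ⟨T.equivFin ⟨w, hw⟩, ?_⟩
      rw [hxdef]
      simp
  have hAmem : ∀ w : HahnSeries Γ K, w ∈ A → w ∈ (MvPolynomial.aeval (R := K) x).range := by
    intro w hw
    have h1 : A = Algebra.adjoin K (Set.range x) := by rw [hx, hT]
    have h2 : Algebra.adjoin K (Set.range x) = (MvPolynomial.aeval (R := K) x).range :=
      Algebra.adjoin_range_eq_range_aeval K x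
    rw [h1, h2] at hw
    exact hw
  obtain ⟨z, hzF, hzQ⟩ := exists_good K Γ hg (r + 1)
  have hzind : AlgebraicIndependent K z := indep_of_coeffs (ratSubfield K) z hzF hzQ
  by_contra hcon
  push_neg at hcon
  have key : ∀ q : HahnSeries Γ K, (∃ u ∈ R, ∃ v ∈ R, v ≠ 0 ∧ q = u / v) →
      ∃ e f : HahnSeries Γ K, e ∈ (MvPolynomial.aeval (R := K) x).range ∧
        f ∈ (MvPolynomial.aeval (R := K) x).range ∧ f ≠ 0 ∧ q = e / f := by
    rintro q ⟨u, hu, v, hv, hv0, rfl⟩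
    rw [hR] at hu hv
    obtain ⟨a, b, hb, rfl⟩ := hu
    obtain ⟨cc, dd, hdd, rfl⟩ := hv
    have hb0 : (b : HahnSeries Γ K) ≠ 0 := by
      intro h
      exact hb (by rw [ZeroMemClass.coe_eq_zero.1 h]; exact P.zero_mem)
    have hdd0 : (dd : HahnSeries Γ K) ≠ 0 := by
      intro h
      exact hdd (by rw [ZeroMemClass.coe_eq_zero.1 h]; exact P.zero_mem)
    have hcc0 : (cc : HahnSeries Γ K) ≠ 0 := by
      intro h
      exact hv0 (by rw [h, zero_div])
    refine ⟨(a : HahnSeries Γ K) * dd, (b : HahnSeries Γ K) * cc,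
      hAmem _ (A.mul_mem a.2 dd.2), hAmem _ (A.mul_mem b.2 cc.2),
      mul_ne_zero hb0 hcc0, ?_⟩
    field_simp
  have hex : ∀ j, ∃ Pp : Polynomial (HahnSeries Γ K), Pp ≠ 0 ∧
      (∀ k, Pp.coeff k ∈ (MvPolynomial.aeval (R := K) x).range) ∧
      Polynomial.eval (z j) Pp = 0 := by
    intro j
    obtain ⟨G, hG0, hGc, hGe⟩ := hcon (z j)
    choose e f he hf hf0 hq using fun k => key _ (hGc k)
    set n₀ := G.natDegree with hn₀
    set fcom : HahnSeries Γ K := ∏ k ∈ Finset.range (n₀ + 1), f k with hfcom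
    have hfcom0 : fcom ≠ 0 := Finset.prod_ne_zero_iff.2 fun k _ => hf0 k
    refine ⟨Polynomial.C fcom * G, ?_, ?_, ?_⟩
    · exact mul_ne_zero (by simpa using hfcom0) hG0
    · intro k
      rw [Polynomial.coeff_C_mul]
      by_cases hk : k ≤ n₀
      · have hmem : k ∈ Finset.range (n₀ + 1) := Finset.mem_range.2 (by omega)
        have h1 : fcom = f k * ∏ l ∈ (Finset.range (n₀ + 1)).erase k, f l :=
          (Finset.mul_prod_erase _ _ hmem).symm
        have h2 : fcom * G.coeff k = e k * ∏ l ∈ (Finset.range (n₀ + 1)).erase k, f l := by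
          rw [hq k, h1, mul_comm (f k) (∏ l ∈ (Finset.range (n₀ + 1)).erase k, f l), mul_assoc,
            mul_comm (f k) (e k / f k), div_mul_cancel₀ _ (hf0 k), mul_comm]
        rw [h2]
        exact Subalgebra.mul_mem _ (he k) (Subalgebra.prod_mem _ fun l _ => hf l)
      · have : G.coeff k = 0 := Polynomial.coeff_eq_zero_of_natDegree_lt (by omega)
        rw [this, mul_zero]
        exact Subalgebra.zero_mem _
    · rw [Polynomial.eval_mul, Polynomial.eval_C, hGe, mul_zero]
  exact growth_contradiction x z hzind hex
end

section
/- Let (a_i)_{i ≥ 3} and (b_i)_{i ≥ 3} be sequences of positive integers with b_{i+1} > b_i for all i ≥ 3, and, setting a_2 = 0, suppose the ratios (a_{i+1} − a_i)/b_{i+1} are positive and strictly increasing with i for i ≥ 2. In ℤ² define γ_1 = (0,1), γ_2 = (1,0), and γ_i = (b_i, a_{i−1} − a_i) for i ≥ 3. Then for every i ≥ 4, no positive integer multiple of γ_i belongs to the subsemigroup S_{i−1} of (ℤ², +) generated by γ_1, …, γ_{i−1}; indeed, γ_i lies outside the cone with vertex 0 generated by γ_1, …, γ_{i−1} in ℝ².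 -/
lemma rmono_aux (a b : ℕ → ℤ)
    (h : ∀ i, 2 ≤ i → ((a (i + 1) - a i : ℚ) / (b (i + 1) : ℚ)) < ((a (i + 2) - a (i + 1) : ℚ) / (b (i + 2) : ℚ))) :
    ∀ m n, 2 ≤ m → m < n →
      ((a (m + 1) - a m : ℚ) / (b (m + 1) : ℚ)) < ((a (n + 1) - a n : ℚ) / (b (n + 1) : ℚ)) := by
  intro m n hm hmn
  induction n with
  | zero => omega
  | succ n ih =>
    rcases Nat.lt_succ_iff_lt_or_eq.mp hmn with h' | h'
    · exact (ih h').trans (h n (by omega))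
    · subst h'; exact h m hm


/-- Example of a semigroup of a noetherian local ring which is not rationally finitely
generated: with `a_2 = 0` and sequences of positive integers `(a_i)_{i ≥ 3}`, `(b_i)_{i ≥ 3}`
such that `b_{i+1} > b_i` and the ratios `(a_{i+1} - a_i)/b_{i+1}` are positive and strictly
increasing, setting `γ_1 = (0,1)`, `γ_2 = (1,0)` and `γ_i = (b_i, a_{i-1} - a_i)` for `i ≥ 3`,
no positive multiple of `γ_i` (for `i ≥ 4`) lies in the subsemigroup of `(ℤ², +)` generated by
`γ_1, …, γ_{i-1}`; indeed `γ_i` lies outside the cone with vertex `0` generated by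
`γ_1, …, γ_{i-1}` in `ℝ²`. -/
theorem gamma_not_rationally_dependent
    (a b : ℕ → ℤ)
    (ha2 : a 2 = 0)
    (hapos : ∀ i, 3 ≤ i → 0 < a i)
    (hbpos : ∀ i, 3 ≤ i → 0 < b i)
    (hbmono : ∀ i, 3 ≤ i → b i < b (i + 1))
    (hratiopos : ∀ i, 2 ≤ i → 0 < ((a (i + 1) - a i : ℚ) / (b (i + 1) : ℚ)))
    (hratiomono : ∀ i, 2 ≤ i →
      ((a (i + 1) - a i : ℚ) / (b (i + 1) : ℚ)) < ((a (i + 2) - a (i + 1) : ℚ) / (b (i + 2) : ℚ)))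
    (γ : ℕ → ℤ × ℤ)
    (hγ1 : γ 1 = (0, 1)) (hγ2 : γ 2 = (1, 0))
    (hγ : ∀ i, 3 ≤ i → γ i = (b i, a (i - 1) - a i)) :
    ∀ i, 4 ≤ i →
      (∀ k : ℕ, 0 < k → k • γ i ∉ AddSubsemigroup.closure (γ '' Set.Icc 1 (i - 1))) ∧
      ¬ ∃ c : Fin (i - 1) → ℝ, (∀ j, 0 ≤ c j) ∧
          (((γ i).1 : ℝ), ((γ i).2 : ℝ)) =
            ∑ j : Fin (i - 1), c j • ((((γ ((j : ℕ) + 1)).1 : ℝ), ((γ ((j : ℕ) + 1)).2 : ℝ)) : ℝ × ℝ) := by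
  intro i hi
  have hi3 : 3 ≤ i := by omega
  have hii : i - 1 + 1 = i := by omega
  have hbi : 0 < b i := hbpos i hi3
  have hbiQ : (0 : ℚ) < (b i : ℚ) := by exact_mod_cast hbi
  have hA : 0 < a i - a (i - 1) := by
    have h := hratiopos (i - 1) (by omega)
    rw [hii] at h
    rcases div_pos_iff.mp h with ⟨h1, _⟩ | ⟨_, h2⟩
    · exact_mod_cast h1
    · linarith
  have hL : ∀ j, 1 ≤ j → j ≤ i - 1 →
      0 < (a i - a (i - 1)) * (γ j).1 + b i * (γ j).2 := by
    intro j hj1 hj2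
    rcases show j = 1 ∨ j = 2 ∨ 3 ≤ j by omega with rfl | rfl | hj3
    · rw [hγ1]; simpa using hbi
    · rw [hγ2]; simpa using hA
    · have hbj : 0 < b j := hbpos j hj3
      have hjj : j - 1 + 1 = j := by omega
      have key := rmono_aux a b hratiomono (j - 1) (i - 1) (by omega) (by omega)
      rw [hjj, hii] at key
      rw [div_lt_div_iff₀ (by exact_mod_cast hbj) hbiQ] at key
      have keyZ : (a j - a (j - 1)) * b i < (a i - a (i - 1)) * b j := by exact_mod_cast key
      rw [hγ j hj3]
      simp only
      nlinarith [keyZ]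
  constructor
  · intro k hk hmem
    have hpos : 0 < (a i - a (i - 1)) * (k • γ i).1 + b i * (k • γ i).2 := by
      refine AddSubsemigroup.closure_induction ?_ ?_ hmem
      · rintro x ⟨j, ⟨hj1, hj2⟩, rfl⟩
        exact hL j hj1 hj2
      · intro x y _ _ hx hy
        simp only [Prod.fst_add, Prod.snd_add]
        nlinarith
    rw [hγ i hi3] at hpos
    simp only [Prod.smul_mk, smul_eq_mul, nsmul_eq_mul] at hpos
    nlinarith [hpos]
  · rintro ⟨c, hc, heq⟩
    have h1 : ((γ i).1 : ℝ) = ∑ j : Fin (i - 1), c j * ((γ ((j : ℕ) + 1)).1 : ℝ) := by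
      have := congrArg Prod.fst heq
      simpa [Prod.fst_sum] using this
    have h2 : ((γ i).2 : ℝ) = ∑ j : Fin (i - 1), c j * ((γ ((j : ℕ) + 1)).2 : ℝ) := by
      have := congrArg Prod.snd heq
      simpa [Prod.snd_sum] using this
    set A : ℝ := ((a i - a (i - 1) : ℤ) : ℝ) with hAdef
    set B : ℝ := ((b i : ℤ) : ℝ) with hBdef
    have hzero : ∑ j : Fin (i - 1),
        c j * (A * ((γ ((j : ℕ) + 1)).1 : ℝ) + B * ((γ ((j : ℕ) + 1)).2 : ℝ)) = 0 := by
      have e : A * ((γ i).1 : ℝ) + B * ((γ i).2 : ℝ) = 0 := by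
        rw [hγ i hi3]; push_cast [hAdef, hBdef]; ring
      calc ∑ j : Fin (i - 1),
            c j * (A * ((γ ((j : ℕ) + 1)).1 : ℝ) + B * ((γ ((j : ℕ) + 1)).2 : ℝ))
          = A * (∑ j : Fin (i - 1), c j * ((γ ((j : ℕ) + 1)).1 : ℝ))
            + B * (∑ j : Fin (i - 1), c j * ((γ ((j : ℕ) + 1)).2 : ℝ)) := by
            rw [Finset.mul_sum, Finset.mul_sum, ← Finset.sum_add_distrib]
            exact Finset.sum_congr rfl fun j _ => by ring
        _ = A * ((γ i).1 : ℝ) + B * ((γ i).2 : ℝ) := by rw [← h1, ← h2]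
        _ = 0 := e
    have hposR : ∀ j : Fin (i - 1),
        0 < A * ((γ ((j : ℕ) + 1)).1 : ℝ) + B * ((γ ((j : ℕ) + 1)).2 : ℝ) := by
      intro j
      have := hL ((j : ℕ) + 1) (by omega) (by omega)
      rw [hAdef, hBdef]
      exact_mod_cast this
    have hczero : ∀ j : Fin (i - 1), c j = 0 := by
      intro j
      have hnn : ∀ j ∈ Finset.univ, (0 : ℝ) ≤
          c j * (A * ((γ ((j : ℕ) + 1)).1 : ℝ) + B * ((γ ((j : ℕ) + 1)).2 : ℝ)) :=
        fun j _ => mul_nonneg (hc j) (hposR j).le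
      have := (Finset.sum_eq_zero_iff_of_nonneg hnn).mp hzero j (Finset.mem_univ j)
      rcases mul_eq_zero.mp this with h | h
      · exact h
      · exact absurd h (hposR j).ne'
    have : ((γ i).1 : ℝ) = 0 := by
      rw [h1]
      exact Finset.sum_eq_zero fun j _ => by rw [hczero j, zero_mul]
    rw [hγ i hi3] at this
    simp only at this
    have : (b i : ℝ) = 0 := by exact_mod_cast this
    have : b i = 0 := by exact_mod_cast this
    omega
end
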